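/- arXiv:1811.06493 — 4 statements merged into one kernel-verified Lean document; each statement's English description precedes it below -/
import Mathlib

section
/- Let F be a non-empty bounded subset of ℝⁿ and 0 ≤ θ < φ ≤ 1. Then the lower θ-intermediate dimension of F is at most the lower φ-intermediate dimension of F, which is at most (lower θ-intermediate dimension of F) + (1 − θ/φ)(n − lower θ-intermediate dimension of F). -/
open Set

noncomputable section

/-- There is a countable cover of `F` by sets whose diameters all lie between `lo` and `hi`,
with `s`-power diameter sum at most `ε`. -/
def ICov {X : Type} [PseudoEMetricSpace X] (F : Set X) (s lo hi ε : ℝ) : Prop :=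
  ∃ (ι : Type) (_ : Countable ι) (U : ι → Set X), F ⊆ ⋃ i, U i ∧
    (∀ i, ENNReal.ofReal lo ≤ EMetric.diam (U i) ∧ EMetric.diam (U i) ≤ ENNReal.ofReal hi) ∧
    ∑' i, EMetric.diam (U i) ^ s ≤ ENNReal.ofReal ε

/-- There is a countable cover of `F` with no diameter restrictions and
`s`-power diameter sum at most `ε`. -/
def HCov {X : Type} [PseudoEMetricSpace X] (F : Set X) (s ε : ℝ) : Prop :=
  ∃ (ι : Type) (_ : Countable ι) (U : ι → Set X), F ⊆ ⋃ i, U i ∧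
    ∑' i, EMetric.diam (U i) ^ s ≤ ENNReal.ofReal ε

/-- The lower `θ`-intermediate dimension. -/
def lowerIDim {X : Type} [PseudoEMetricSpace X] (F : Set X) (θ : ℝ) : ℝ :=
  if θ = 0 then sInf {s : ℝ | 0 ≤ s ∧ ∀ ε > 0, HCov F s ε}
  else sInf {s : ℝ | 0 ≤ s ∧ ∀ ε > 0, ∀ δ₀ > 0, ∃ δ : ℝ, 0 < δ ∧ δ ≤ δ₀ ∧
    ICov F s (δ ^ (1 / θ)) δ ε}

/-- The upper `θ`-intermediate dimension. -/
def upperIDim {X : Type} [PseudoEMetricSpace X] (F : Set X) (θ : ℝ) : ℝ :=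
  if θ = 0 then sInf {s : ℝ | 0 ≤ s ∧ ∀ ε > 0, HCov F s ε}
  else sInf {s : ℝ | 0 ≤ s ∧ ∀ ε > 0, ∃ δ₀ > (0:ℝ), ∀ δ : ℝ, 0 < δ → δ ≤ δ₀ →
    ICov F s (δ ^ (1 / θ)) δ ε}

/-- A countable cover of `F` by sets all of diameter exactly `δ`,
with `s`-power diameter sum at most `ε`. -/
def EqCov {X : Type} [PseudoEMetricSpace X] (F : Set X) (s δ ε : ℝ) : Prop :=
  ∃ (ι : Type) (_ : Countable ι) (U : ι → Set X), F ⊆ ⋃ i, U i ∧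
    (∀ i, EMetric.diam (U i) = ENNReal.ofReal δ) ∧
    ∑' i, EMetric.diam (U i) ^ s ≤ ENNReal.ofReal ε

/-- The lower box dimension. -/
def lowerBoxDim {X : Type} [PseudoEMetricSpace X] (F : Set X) : ℝ :=
  sInf {s : ℝ | 0 ≤ s ∧ ∀ ε > 0, ∀ δ₀ > 0, ∃ δ : ℝ, 0 < δ ∧ δ ≤ δ₀ ∧ EqCov F s δ ε}

/-- The upper box dimension. -/
def upperBoxDim {X : Type} [PseudoEMetricSpace X] (F : Set X) : ℝ :=
  sInf {s : ℝ | 0 ≤ s ∧ ∀ ε > 0, ∃ δ₀ > (0:ℝ), ∀ δ : ℝ, 0 < δ → δ ≤ δ₀ → EqCov F s δ ε}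

/-- The Assouad dimension. -/
def assouadDim {X : Type} [PseudoEMetricSpace X] (F : Set X) : ℝ :=
  sInf {s : ℝ | 0 ≤ s ∧ ∃ C > (0:ℝ), ∀ x ∈ F, ∀ r R : ℝ, 0 < r → r < R →
    ∃ t : Finset (Set X), (F ∩ EMetric.closedBall x (ENNReal.ofReal R) ⊆ ⋃ U ∈ t, U) ∧
      (∀ U ∈ t, EMetric.diam U ≤ ENNReal.ofReal r) ∧ (t.card : ℝ) ≤ C * (R / r) ^ s}

end


namespace Stmt6Aux

open Metric ENNReal

/-- Auxiliary: the defining set in `lowerIDim` for positive `θ`. -/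
def Sset {X : Type} [PseudoEMetricSpace X] (F : Set X) (ψ : ℝ) : Set ℝ :=
  {s : ℝ | 0 ≤ s ∧ ∀ ε > 0, ∀ δ₀ > 0, ∃ δ : ℝ, 0 < δ ∧ δ ≤ δ₀ ∧
    ICov F s (δ ^ (1 / ψ)) δ ε}

/-- Auxiliary: the defining set in `lowerIDim` for `θ = 0`. -/
def Hset {X : Type} [PseudoEMetricSpace X] (F : Set X) : Set ℝ :=
  {s : ℝ | 0 ≤ s ∧ ∀ ε > 0, HCov F s ε}

lemma lowerIDim_pos_eq {X : Type} [PseudoEMetricSpace X] (F : Set X) {ψ : ℝ} (h : ψ ≠ 0) :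
    lowerIDim F ψ = sInf (Sset F ψ) := by
  simp only [lowerIDim, Sset, if_neg h]

lemma lowerIDim_zero_eq {X : Type} [PseudoEMetricSpace X] (F : Set X) :
    lowerIDim F 0 = sInf (Hset F) := by
  simp [lowerIDim, Hset]

lemma bdd_S {X : Type} [PseudoEMetricSpace X] (F : Set X) (ψ : ℝ) : BddBelow (Sset F ψ) :=
  ⟨0, fun _ hs => hs.1⟩

lemma bdd_H {X : Type} [PseudoEMetricSpace X] (F : Set X) : BddBelow (Hset F) :=
  ⟨0, fun _ hs => hs.1⟩

lemma Sset_subset_Hset {X : Type} [PseudoEMetricSpace X] (F : Set X) (ψ : ℝ) :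
    Sset F ψ ⊆ Hset F := by
  rintro s ⟨hs0, hs⟩
  refine ⟨hs0, fun ε hε => ?_⟩
  obtain ⟨δ, -, -, ι, hι, U, hcov, -, hsum⟩ := hs ε hε 1 one_pos
  exact ⟨ι, hι, U, hcov, hsum⟩

lemma Sset_anti {X : Type} [PseudoEMetricSpace X] (F : Set X) (θ φ : ℝ) (hθ : 0 < θ)
    (hθφ : θ ≤ φ) : Sset F φ ⊆ Sset F θ := by
  have hφ : 0 < φ := lt_of_lt_of_le hθ hθφ
  rintro s ⟨hs0, hs⟩
  refine ⟨hs0, fun ε hε δ₀ hδ₀ => ?_⟩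
  obtain ⟨δ, hδ0, hδle, ι, hι, U, hcov, hbnd, hsum⟩ := hs ε hε (min δ₀ 1) (lt_min hδ₀ one_pos)
  have hδ1 : δ ≤ 1 := hδle.trans (min_le_right _ _)
  refine ⟨δ, hδ0, hδle.trans (min_le_left _ _), ι, hι, U, hcov, fun i => ⟨?_, (hbnd i).2⟩, hsum⟩
  refine le_trans ?_ (hbnd i).1
  apply ENNReal.ofReal_le_ofReal
  exact Real.rpow_le_rpow_of_exponent_ge hδ0 hδ1
    (one_div_le_one_div_of_le hθ hθφ)

lemma up_closed {X : Type} [PseudoEMetricSpace X] (F : Set X) (ψ : ℝ) (hψ : 0 < ψ)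
    {s s' : ℝ} (h : s ∈ Sset F ψ) (hss : s ≤ s') : s' ∈ Sset F ψ := by
  refine ⟨h.1.trans hss, fun ε hε δ₀ hδ₀ => ?_⟩
  obtain ⟨δ, hδ0, hδle, ι, hι, U, hcov, hbnd, hsum⟩ := h.2 ε hε (min δ₀ 1) (lt_min hδ₀ one_pos)
  have hδ1 : δ ≤ 1 := hδle.trans (min_le_right _ _)
  refine ⟨δ, hδ0, hδle.trans (min_le_left _ _), ι, hι, U, hcov, hbnd, le_trans ?_ hsum⟩
  refine ENNReal.tsum_le_tsum fun i => ENNReal.rpow_le_rpow_of_exponent_ge ?_ hss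
  exact le_trans (hbnd i).2 (ENNReal.ofReal_le_one.mpr hδ1)

lemma diam_cball (n : ℕ) (hn : 0 < n) (x : EuclideanSpace ℝ (Fin n)) (ρ : ℝ) (hρ : 0 ≤ ρ) :
    EMetric.diam (Metric.closedBall x ρ) = ENNReal.ofReal (2*ρ) := by
  have : Nontrivial (EuclideanSpace ℝ (Fin n)) := by
    have : Nonempty (Fin n) := ⟨⟨0, hn⟩⟩
    infer_instance
  apply le_antisymm
  · rw [← Metric.emetric_closedBall hρ]
    calc EMetric.diam (EMetric.closedBall x (ENNReal.ofReal ρ)) ≤ 2 * ENNReal.ofReal ρ :=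
          EMetric.diam_closedBall
      _ = ENNReal.ofReal (2*ρ) := by rw [ENNReal.ofReal_mul (by norm_num)]; simp
  · obtain ⟨v, hv⟩ := exists_ne (0 : EuclideanSpace ℝ (Fin n))
    set u : EuclideanSpace ℝ (Fin n) := (ρ/‖v‖) • v with hu
    have hnv : 0 < ‖v‖ := norm_pos_iff.2 hv
    have hun : ‖u‖ = ρ := by
      rw [hu, norm_smul, Real.norm_eq_abs, abs_div, abs_of_nonneg hρ, abs_of_nonneg hnv.le]
      field_simp
    have h1 : x + u ∈ Metric.closedBall x ρ := by
      simp [Metric.mem_closedBall, dist_eq_norm, hun]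
    have h2 : x - u ∈ Metric.closedBall x ρ := by
      simp [Metric.mem_closedBall, dist_eq_norm, hun]
    have := EMetric.edist_le_diam_of_mem h1 h2
    calc ENNReal.ofReal (2*ρ) = edist (x+u) (x-u) := by
          rw [edist_dist, dist_eq_norm]
          congr 1
          have : x + u - (x - u) = (2:ℝ) • u := by module
          rw [this, norm_smul, hun]; simp
      _ ≤ _ := this

lemma coord_dist_le (n : ℕ) (x y : EuclideanSpace ℝ (Fin n)) (i : Fin n) :
    dist (x i) (y i) ≤ dist x y := by
  rw [EuclideanSpace.dist_eq]
  calc dist (x i) (y i) = Real.sqrt (dist (x i) (y i)^2) := (Real.sqrt_sq dist_nonneg).symm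
    _ ≤ _ := Real.sqrt_le_sqrt
        (Finset.single_le_sum (fun j _ => sq_nonneg (dist (x j) (y j))) (Finset.mem_univ i))

lemma grid_cover (n : ℕ) (hn : 0 < n) (E : Set (EuclideanSpace ℝ (Fin n))) (D r : ℝ)
    (hr : 0 < r) (hD : 0 ≤ D) (hdiam : EMetric.diam E ≤ ENNReal.ofReal D) :
    ∃ (κ : Type) (_ : Fintype κ) (c : κ → EuclideanSpace ℝ (Fin n)),
      E ⊆ ⋃ j, Metric.closedBall (c j) (r/2) ∧
      (Fintype.card κ : ℝ) ≤ (4 * Real.sqrt n * D / r + 2)^n := by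
  have hsq : (1:ℝ) ≤ Real.sqrt n := by
    rw [show (1:ℝ) = Real.sqrt 1 by simp]
    exact Real.sqrt_le_sqrt (by exact_mod_cast hn)
  have hsq0 : (0:ℝ) < Real.sqrt n := lt_of_lt_of_le one_pos hsq
  rcases E.eq_empty_or_nonempty with hE | ⟨x₀, hx₀⟩
  · refine ⟨Empty, inferInstance, Empty.elim, by simp [hE], ?_⟩
    simp only [Fintype.card_eq_zero, Nat.cast_zero]
    positivity
  · set h : ℝ := r / (2 * Real.sqrt n) with hh
    have hh0 : 0 < h := by positivity
    set M : ℕ := ⌊2*D/h⌋₊ + 1 with hM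
    have hcoord : ∀ x ∈ E, ∀ i, |x i - x₀ i| ≤ D := by
      intro x hx i
      have hd : dist x x₀ ≤ D := by
        have h2 := le_trans (EMetric.edist_le_diam_of_mem hx hx₀) hdiam
        rw [edist_dist] at h2
        exact (ENNReal.ofReal_le_ofReal_iff hD).mp h2
      calc |x i - x₀ i| = dist (x i) (x₀ i) := (Real.dist_eq _ _).symm
        _ ≤ dist x x₀ := coord_dist_le n x x₀ i
        _ ≤ D := hd
    have hkey : ∀ x ∈ E, ∀ i, ⌊(x i - (x₀ i - D))/h⌋₊ < M := by
      intro x hx i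
      have h1 : x i - (x₀ i - D) ≤ 2*D := by
        have := (abs_le.mp (hcoord x hx i)).2; linarith
      have : ⌊(x i - (x₀ i - D))/h⌋₊ ≤ ⌊2*D/h⌋₊ :=
        Nat.floor_mono (by gcongr)
      omega
    refine ⟨Fin n → Fin M, inferInstance,
      fun k => (WithLp.toLp 2 (fun i => (x₀ i - D) + h/2 + k i * h) : EuclideanSpace ℝ (Fin n)), ?_, ?_⟩
    · intro x hx
      refine Set.mem_iUnion.mpr ⟨fun i => ⟨⌊(x i - (x₀ i - D))/h⌋₊, hkey x hx i⟩, ?_⟩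
      rw [Metric.mem_closedBall, EuclideanSpace.dist_eq]
      have hcd : ∀ i : Fin n, dist (x i) ((x₀ i - D) + h/2 +
          (⌊(x i - (x₀ i - D))/h⌋₊ : ℝ) * h) ≤ h/2 := by
        intro i
        set y : ℝ := x i - (x₀ i - D) with hy
        have hy0 : 0 ≤ y := by
          have := (abs_le.mp (hcoord x hx i)).1; simp only [hy]; linarith
        have hfl : (⌊y/h⌋₊ : ℝ) * h ≤ y := by
          have := Nat.floor_le (div_nonneg hy0 hh0.le)
          calc (⌊y/h⌋₊ : ℝ) * h ≤ (y/h) * h := by nlinarith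
            _ = y := by field_simp
        have hfu : y ≤ ((⌊y/h⌋₊ : ℝ) + 1) * h := by
          have := (Nat.lt_floor_add_one (y/h)).le
          calc y = (y/h) * h := by field_simp
            _ ≤ ((⌊y/h⌋₊ : ℝ) + 1) * h := by nlinarith
        rw [Real.dist_eq, abs_le]
        constructor <;> [skip; skip] <;> simp only [hy] at hfl hfu ⊢ <;> nlinarith
      calc Real.sqrt (∑ i, dist (x i) ((x₀ i - D) + h/2 + (⌊(x i - (x₀ i - D))/h⌋₊ : ℝ) * h) ^ 2)
          ≤ Real.sqrt (∑ _i : Fin n, (h/2)^2) := by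
            refine Real.sqrt_le_sqrt (Finset.sum_le_sum fun i _ => ?_)
            exact pow_le_pow_left₀ dist_nonneg (hcd i) 2
        _ = Real.sqrt n * (h/2) := by
            rw [Finset.sum_const, Finset.card_univ, Fintype.card_fin, nsmul_eq_mul,
              Real.sqrt_mul (by positivity), Real.sqrt_sq (by positivity)]
        _ ≤ r/2 := by
            have : Real.sqrt n * (h/2) = r/4 := by rw [hh]; field_simp; ring
            rw [this]; linarith
    · have hcard : (Fintype.card (Fin n → Fin M) : ℝ) = (M:ℝ)^n := by
        rw [Fintype.card_fun, Fintype.card_fin, Fintype.card_fin]; push_cast; ring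
      rw [hcard]
      have hMle : (M:ℝ) ≤ 4 * Real.sqrt n * D / r + 2 := by
        have h1 : (⌊2*D/h⌋₊ : ℝ) ≤ 2*D/h := Nat.floor_le (by positivity)
        have h2 : 2*D/h = 4 * Real.sqrt n * D / r := by rw [hh]; field_simp; ring
        push_cast [hM]
        linarith [h1.trans_eq h2]
      exact pow_le_pow_left₀ (by positivity) hMle n

lemma ball_cover (n : ℕ) (hn : 0 < n) (E : Set (EuclideanSpace ℝ (Fin n))) (D r : ℝ)
    (hr : 0 < r) (hD : 0 ≤ D) (hdiam : EMetric.diam E ≤ ENNReal.ofReal D) :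
    ∃ (κ : Type) (_ : Fintype κ) (V : κ → Set (EuclideanSpace ℝ (Fin n))),
      E ⊆ ⋃ j, V j ∧ (∀ j, EMetric.diam (V j) = ENNReal.ofReal r) ∧
      (Fintype.card κ : ℝ) ≤ (4 * Real.sqrt n * D / r + 2)^n := by
  obtain ⟨κ, hκ, c, hcov, hcard⟩ := grid_cover n hn E D r hr hD hdiam
  refine ⟨κ, hκ, fun j => Metric.closedBall (c j) (r/2), hcov, fun j => ?_, hcard⟩
  rw [diam_cball n hn _ _ (by linarith)]
  congr 1; ring

lemma sum_eq_card {κ : Type} [Fintype κ] (a : ℝ≥0∞) :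
    ∑' _ : κ, a = (Fintype.card κ : ℝ≥0∞) * a := by
  rw [tsum_fintype]
  simp [Finset.sum_const, Finset.card_univ, nsmul_eq_mul]

lemma mem_S_of_gt (n : ℕ) (hn : 0 < n) (F : Set (EuclideanSpace ℝ (Fin n)))
    (hF : Bornology.IsBounded F) (ψ : ℝ) (hψ : 0 < ψ) (hψ1 : ψ ≤ 1) (s : ℝ) (hs : (n:ℝ) < s) :
    s ∈ Sset F ψ := by
  have hs0 : (0:ℝ) ≤ s := le_trans (Nat.cast_nonneg n) hs.le
  refine ⟨hs0, fun ε hε δ₀ hδ₀ => ?_⟩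
  set D : ℝ := (EMetric.diam F).toReal with hDdef
  have hD0 : 0 ≤ D := ENNReal.toReal_nonneg
  have hDne : EMetric.diam F ≠ ⊤ := hF.ediam_ne_top
  have hdiam : EMetric.diam F ≤ ENNReal.ofReal D := by
    rw [hDdef, ENNReal.ofReal_toReal hDne]
  set A : ℝ := 4 * Real.sqrt n * D + 2 with hAdef
  have hA : 0 < A := by positivity
  set δ : ℝ := min δ₀ (min 1 ((ε/A^n) ^ (1/(s - (n:ℝ))))) with hδdef
  have hpos : 0 < (ε/A^n) ^ (1/(s - (n:ℝ))) := Real.rpow_pos_of_pos (by positivity) _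
  have hδpos : 0 < δ := lt_min hδ₀ (lt_min one_pos hpos)
  have hδ1 : δ ≤ 1 := le_trans (min_le_right _ _) (min_le_left _ _)
  have hδb : δ ≤ (ε/A^n) ^ (1/(s - (n:ℝ))) := le_trans (min_le_right _ _) (min_le_right _ _)
  refine ⟨δ, hδpos, min_le_left _ _, ?_⟩
  obtain ⟨κ, hκ, V, hcov, hdiamV, hcard⟩ := ball_cover n hn F D δ hδpos hD0 hdiam
  refine ⟨κ, inferInstance, V, hcov, fun j => ?_, ?_⟩
  · constructor
    · rw [hdiamV j]
      apply ENNReal.ofReal_le_ofReal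
      calc δ ^ (1/ψ) ≤ δ ^ (1:ℝ) :=
          Real.rpow_le_rpow_of_exponent_ge hδpos hδ1 (by rw [le_div_iff₀ hψ]; linarith)
        _ = δ := Real.rpow_one δ
    · rw [hdiamV j]
  · have hsum : ∑' j : κ, EMetric.diam (V j) ^ s = (Fintype.card κ : ℝ≥0∞) * ENNReal.ofReal (δ ^ s) := by
      rw [← sum_eq_card]
      congr 1
      ext j
      rw [hdiamV j, ← ENNReal.ofReal_rpow_of_pos hδpos]
    rw [hsum]
    have hcard' : (Fintype.card κ : ℝ) ≤ (A/δ)^n := by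
      refine hcard.trans (pow_le_pow_left₀ (by positivity) ?_ n)
      rw [hAdef]
      rw [div_add' _ _ _ hδpos.ne', div_le_div_iff₀ hδpos hδpos]
      have h2 : 2 * δ ≤ 2 := by linarith
      nlinarith [Real.sqrt_nonneg (n:ℝ)]
    calc (Fintype.card κ : ℝ≥0∞) * ENNReal.ofReal (δ ^ s)
        ≤ ENNReal.ofReal ((A/δ)^n) * ENNReal.ofReal (δ ^ s) := by
          gcongr
          rw [show ((Fintype.card κ : ℝ≥0∞)) = ENNReal.ofReal (Fintype.card κ) by
            simp [ENNReal.ofReal_natCast]]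
          exact ENNReal.ofReal_le_ofReal hcard'
      _ = ENNReal.ofReal ((A/δ)^n * δ ^ s) := by
          rw [ENNReal.ofReal_mul (by positivity)]
      _ ≤ ENNReal.ofReal ε := by
          apply ENNReal.ofReal_le_ofReal
          have key : (A/δ)^n * δ ^ s = A^n * δ ^ (s - (n:ℝ)) := by
            rw [div_pow, Real.rpow_sub hδpos, ← Real.rpow_natCast δ n]
            field_simp
          rw [key]
          have h1 : δ ^ (s - (n:ℝ)) ≤ ε / A^n := by
            calc δ ^ (s - (n:ℝ)) ≤ ((ε/A^n) ^ (1/(s - (n:ℝ)))) ^ (s - (n:ℝ)) :=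
                Real.rpow_le_rpow hδpos.le hδb (by linarith)
              _ = ε / A^n := by
                  rw [← Real.rpow_natCast A n] at *
                  rw [← Real.rpow_mul (by positivity), one_div,
                    inv_mul_cancel₀ (by intro h; rw [sub_eq_zero] at h; linarith), Real.rpow_one]
          calc A^n * δ ^ (s - (n:ℝ)) ≤ A^n * (ε / A^n) := by nlinarith [pow_pos hA n]
            _ = ε := by field_simp

set_option maxHeartbeats 1000000 in
lemma main_step (n : ℕ) (hn : 0 < n) (F : Set (EuclideanSpace ℝ (Fin n)))
    (θ φ : ℝ) (hθ : 0 < θ) (hθφ : θ < φ) (h1 : φ ≤ 1)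
    (s : ℝ) (hs0 : 0 ≤ s) (hsn : s ≤ n) (hmem : s ∈ Sset F θ) :
    (θ/φ * s + (1 - θ/φ) * n) ∈ Sset F φ := by
  have hφ : 0 < φ := lt_of_le_of_lt hθ.le hθφ
  have hratio0 : 0 < θ/φ := by positivity
  have hratio1 : θ/φ < 1 := (div_lt_one hφ).mpr hθφ
  set t : ℝ := θ/φ * s + (1 - θ/φ) * n with htdef
  have haux : (0:ℝ) ≤ (1 - θ/φ) * ((n:ℝ) - s) := mul_nonneg (by linarith) (by linarith)
  have hts : s ≤ t := by rw [htdef]; nlinarith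
  have htn : t ≤ n := by
    rw [htdef]
    nlinarith [mul_nonneg hratio0.le (by linarith : (0:ℝ) ≤ (n:ℝ) - s)]
  have ht0 : 0 ≤ t := le_trans hs0 hts
  set C : ℝ := (4 * Real.sqrt n + 2)^n with hCdef
  have hsq : (1:ℝ) ≤ Real.sqrt n := by
    rw [show (1:ℝ) = Real.sqrt 1 by simp]
    exact Real.sqrt_le_sqrt (by exact_mod_cast hn)
  have hC1 : 1 ≤ C := one_le_pow₀ (by linarith)
  have hC0 : 0 < C := lt_of_lt_of_le one_pos hC1
  refine ⟨ht0, fun ε' hε' δ₀' hδ₀' => ?_⟩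
  obtain ⟨δ, hδ0, hδle, ι, hι, U, hcov, hbnd, hsum⟩ :=
    hmem.2 (ε'/C) (by positivity) (min 1 (δ₀' ^ (θ/φ)))
      (lt_min one_pos (Real.rpow_pos_of_pos hδ₀' _))
  have hδ1 : δ ≤ 1 := hδle.trans (min_le_left _ _)
  set δ' : ℝ := δ ^ (φ/θ) with hδ'def
  have hδ'0 : 0 < δ' := Real.rpow_pos_of_pos hδ0 _
  have hδ'1 : δ' ≤ 1 := Real.rpow_le_one hδ0.le hδ1 (by positivity)
  have hδ'le : δ' ≤ δ₀' := by
    calc δ' = δ ^ (φ/θ) := rfl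
      _ ≤ (δ₀' ^ (θ/φ)) ^ (φ/θ) :=
          Real.rpow_le_rpow hδ0.le (hδle.trans (min_le_right _ _)) (by positivity)
      _ = δ₀' := by
          rw [← Real.rpow_mul hδ₀'.le, show θ/φ * (φ/θ) = 1 by rw [div_mul_div_comm, mul_comm θ φ]; exact div_self (by positivity)]
          exact Real.rpow_one _
  have hexp : δ' ^ (1/φ) = δ ^ (1/θ) := by
    rw [hδ'def, ← Real.rpow_mul hδ0.le, show φ/θ * (1/φ) = 1/θ by rw [div_mul_div_comm, mul_comm θ φ]; exact mul_div_mul_left 1 θ hφ.ne']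
  have hexp2 : δ' ^ (t - (n:ℝ)) = δ ^ (s - (n:ℝ)) := by
    rw [hδ'def, ← Real.rpow_mul hδ0.le]
    congr 1
    field_simp [htdef]
    have hφθ : φ * (θ/φ) = θ := by field_simp
    rw [htdef]
    linear_combination (s - n) * hφθ
  refine ⟨δ', hδ'0, hδ'le, ?_⟩
  have key : ∀ i : ι, ∃ (κ : Type) (_ : Fintype κ) (V : κ → Set (EuclideanSpace ℝ (Fin n))),
      U i ⊆ ⋃ j, V j ∧
      (∀ j, ENNReal.ofReal (δ' ^ (1/φ)) ≤ EMetric.diam (V j) ∧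
        EMetric.diam (V j) ≤ ENNReal.ofReal δ') ∧
      ∑' j, EMetric.diam (V j) ^ t ≤ ENNReal.ofReal C * EMetric.diam (U i) ^ s := by
    intro i
    obtain ⟨hlo, hhi⟩ := hbnd i
    have hne : EMetric.diam (U i) ≠ ⊤ := (hhi.trans_lt ENNReal.ofReal_lt_top).ne
    set d : ℝ := (EMetric.diam (U i)).toReal with hddef
    have hdiam_eq : EMetric.diam (U i) = ENNReal.ofReal d := (ENNReal.ofReal_toReal hne).symm
    have hd_lo : δ ^ (1/θ) ≤ d := by
      rw [hdiam_eq] at hlo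
      exact (ENNReal.ofReal_le_ofReal_iff ENNReal.toReal_nonneg).mp hlo
    have hd_hi : d ≤ δ := by
      rw [hdiam_eq] at hhi
      exact (ENNReal.ofReal_le_ofReal_iff hδ0.le).mp hhi
    have hd0 : 0 < d := lt_of_lt_of_le (Real.rpow_pos_of_pos hδ0 _) hd_lo
    have hdpow : EMetric.diam (U i) ^ s = ENNReal.ofReal (d ^ s) := by
      rw [hdiam_eq, ← ENNReal.ofReal_rpow_of_pos hd0]
    by_cases hcase : d ≤ δ'
    · refine ⟨PUnit, inferInstance, fun _ => U i, fun x hx => Set.mem_iUnion.mpr ⟨PUnit.unit, hx⟩, fun _ => ?_, ?_⟩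
      · exact ⟨by rw [hexp]; exact hlo, by rw [hdiam_eq]; exact ENNReal.ofReal_le_ofReal hcase⟩
      · rw [sum_eq_card]
        simp only [Fintype.card_unit, Nat.cast_one, one_mul]
        calc EMetric.diam (U i) ^ t ≤ EMetric.diam (U i) ^ s := by
              refine ENNReal.rpow_le_rpow_of_exponent_ge ?_ hts
              rw [hdiam_eq]
              exact le_trans (ENNReal.ofReal_le_ofReal (hcase.trans hδ'1)) (by simp)
          _ ≤ ENNReal.ofReal C * EMetric.diam (U i) ^ s :=
              le_mul_of_one_le_left' (ENNReal.one_le_ofReal.mpr hC1)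
    · push_neg at hcase
      obtain ⟨κ, hκ, V, hVcov, hVd, hVcard⟩ :=
        ball_cover n hn (U i) d δ' hδ'0 hd0.le (le_of_eq hdiam_eq)
      refine ⟨κ, hκ, V, hVcov, fun j => ?_, ?_⟩
      · rw [hVd j]
        constructor
        · apply ENNReal.ofReal_le_ofReal
          calc δ' ^ (1/φ) ≤ δ' ^ (1:ℝ) :=
              Real.rpow_le_rpow_of_exponent_ge hδ'0 hδ'1 (by rw [le_div_iff₀ hφ]; linarith)
            _ = δ' := Real.rpow_one _
        · exact le_rfl
      · have hVt : ∀ j : κ, EMetric.diam (V j) ^ t = ENNReal.ofReal (δ' ^ t) := by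
          intro j; rw [hVd j, ← ENNReal.ofReal_rpow_of_pos hδ'0]
        calc ∑' j : κ, EMetric.diam (V j) ^ t
            = (Fintype.card κ : ℝ≥0∞) * ENNReal.ofReal (δ' ^ t) := by
              rw [← sum_eq_card]; exact tsum_congr hVt
          _ ≤ ENNReal.ofReal (C * (d/δ')^n) * ENNReal.ofReal (δ' ^ t) := by
              refine mul_le_mul_left ?_ _
              rw [← ENNReal.ofReal_natCast (Fintype.card κ)]
              apply ENNReal.ofReal_le_ofReal
              refine hVcard.trans ?_
              have hd1 : 1 ≤ d/δ' := (one_le_div hδ'0).mpr hcase.le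
              calc (4 * Real.sqrt n * d / δ' + 2)^n
                    ≤ ((4 * Real.sqrt n + 2) * (d/δ'))^n := by
                      apply pow_le_pow_left₀ (by positivity)
                      have he : 4 * Real.sqrt n * d / δ' = 4 * Real.sqrt n * (d/δ') := by ring
                      rw [he]; nlinarith [Real.sqrt_nonneg (n:ℝ)]
                  _ = C * (d/δ')^n := by rw [mul_pow]
          _ = ENNReal.ofReal (C * ((d/δ')^n * δ' ^ t)) := by
              rw [← ENNReal.ofReal_mul (by positivity), mul_assoc]
          _ ≤ ENNReal.ofReal C * EMetric.diam (U i) ^ s := by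
              rw [hdpow, ← ENNReal.ofReal_mul hC0.le]
              apply ENNReal.ofReal_le_ofReal
              have e1 : (d/δ')^n * δ' ^ t = d^n * δ' ^ (t - (n:ℝ)) := by
                rw [Real.rpow_sub hδ'0, Real.rpow_natCast, div_pow]
                field_simp
              rw [e1, hexp2]
              have e2 : δ ^ (s - (n:ℝ)) ≤ d ^ (s - (n:ℝ)) :=
                Real.rpow_le_rpow_of_nonpos hd0 hd_hi (by linarith)
              have e3 : d^n * d ^ (s - (n:ℝ)) = d ^ s := by
                rw [← Real.rpow_natCast d n, ← Real.rpow_add hd0]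
                congr 1
                ring
              calc C * (d^n * δ ^ (s-(n:ℝ))) ≤ C * (d^n * d ^ (s-(n:ℝ))) :=
                    mul_le_mul_of_nonneg_left
                      (mul_le_mul_of_nonneg_left e2 (by positivity)) hC0.le
                _ = C * d ^ s := by rw [e3]
  choose κ hκ V hVcov hVbnd hVsum using key
  haveI := hι
  haveI : ∀ i, Countable (κ i) := fun i => @Finite.to_countable _ (Finite.of_fintype _)
  refine ⟨(Σ i, κ i), inferInstance, fun p => V p.1 p.2, ?_, fun p => hVbnd p.1 p.2, ?_⟩
  · refine hcov.trans ?_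
    rw [Set.iUnion_sigma]
    exact Set.iUnion_mono fun i => hVcov i
  · calc ∑' p : Σ i, κ i, EMetric.diam (V p.1 p.2) ^ t
        = ∑' i, ∑' j, EMetric.diam (V i j) ^ t := ENNReal.tsum_sigma' _
      _ ≤ ∑' i, ENNReal.ofReal C * EMetric.diam (U i) ^ s := ENNReal.tsum_le_tsum hVsum
      _ = ENNReal.ofReal C * ∑' i, EMetric.diam (U i) ^ s := ENNReal.tsum_mul_left
      _ ≤ ENNReal.ofReal C * ENNReal.ofReal (ε'/C) := by gcongr
      _ = ENNReal.ofReal ε' := by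
          rw [← ENNReal.ofReal_mul hC0.le]
          congr 1
          field_simp

end Stmt6Aux

open Stmt6Aux Metric ENNReal in
theorem stmt6 (n : ℕ) (F : Set (EuclideanSpace ℝ (Fin n))) (hne : F.Nonempty)
    (hF : Bornology.IsBounded F) (θ φ : ℝ) (h0 : 0 ≤ θ) (hθφ : θ < φ) (h1 : φ ≤ 1) :
    lowerIDim F θ ≤ lowerIDim F φ ∧
      lowerIDim F φ ≤ lowerIDim F θ + (1 - θ / φ) * ((n : ℝ) - lowerIDim F θ) := by
  have hφ : 0 < φ := lt_of_le_of_lt h0 hθφ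
  rcases Nat.eq_zero_or_pos n with hn | hn
  · -- dimension zero case: everything is 0
    subst hn
    have hedist : ∀ a b : EuclideanSpace ℝ (Fin 0), edist a b = 0 := by
      intro a b
      rw [edist_dist, EuclideanSpace.dist_eq]
      simp
    have hdiam0 : ∀ E : Set (EuclideanSpace ℝ (Fin 0)), EMetric.diam E = 0 := by
      intro E
      refine le_antisymm (EMetric.diam_le fun a _ b _ => le_of_eq (hedist a b)) (zero_le)
    have hzero : ∀ ψ : ℝ, 0 < ψ → lowerIDim F ψ = 0 := by
      intro ψ hψ
      rw [Stmt6Aux.lowerIDim_pos_eq F hψ.ne']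
      have : Stmt6Aux.Sset F ψ = ∅ := by
        ext s
        simp only [Set.mem_empty_iff_false, iff_false]
        rintro ⟨hs0, hs⟩
        obtain ⟨δ, hδ0, hδle, ι, hι, U, hcov, hbnd, -⟩ := hs 1 one_pos 1 one_pos
        obtain ⟨x, hx⟩ := hne
        obtain ⟨i, hi⟩ := Set.mem_iUnion.mp (hcov hx)
        have h1 := (hbnd i).1
        rw [hdiam0 (U i)] at h1
        have hpos : (0:ℝ≥0∞) < ENNReal.ofReal (δ ^ (1/ψ)) :=
          ENNReal.ofReal_pos.mpr (Real.rpow_pos_of_pos hδ0 _)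
        exact absurd h1 hpos.not_ge
      rw [this, Real.sInf_empty]
    have hHzero : lowerIDim F 0 = 0 := by
      rw [Stmt6Aux.lowerIDim_zero_eq F]
      have hsub : ∀ γ : ℝ, 0 < γ → γ ∈ Stmt6Aux.Hset F := by
        intro γ hγ
        refine ⟨hγ.le, fun ε hε => ⟨PUnit, inferInstance, fun _ => F, ?_, ?_⟩⟩
        · exact fun x hx => Set.mem_iUnion.mpr ⟨PUnit.unit, hx⟩
        · rw [Stmt6Aux.sum_eq_card]
          simp only [hdiam0 F]
          rw [ENNReal.zero_rpow_of_pos hγ]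
          simp
      apply le_antisymm
      · apply _root_.le_of_forall_pos_le_add
        intro γ hγ
        have := csInf_le (Stmt6Aux.bdd_H F) (hsub γ hγ)
        linarith
      · exact le_csInf ⟨1, hsub 1 one_pos⟩ fun b hb => hb.1
    have hθ0 : lowerIDim F θ = 0 := by
      rcases eq_or_lt_of_le h0 with h0' | hθpos
      · rw [← h0']; exact hHzero
      · exact hzero θ hθpos
    rw [hθ0, hzero φ hφ]
    norm_num
  · -- main case n ≥ 1
    have hSφne : (Stmt6Aux.Sset F φ).Nonempty :=
      ⟨(n:ℝ)+1, Stmt6Aux.mem_S_of_gt n hn F hF φ hφ h1 _ (by linarith)⟩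
    have hble : sInf (Stmt6Aux.Sset F φ) ≤ (n:ℝ) := by
      apply _root_.le_of_forall_pos_le_add
      intro γ hγ
      have := csInf_le (Stmt6Aux.bdd_S F φ)
        (Stmt6Aux.mem_S_of_gt n hn F hF φ hφ h1 ((n:ℝ)+γ) (by linarith))
      linarith
    rcases eq_or_lt_of_le h0 with h0' | hθpos
    · -- θ = 0
      subst h0'
      constructor
      · rw [Stmt6Aux.lowerIDim_zero_eq F, Stmt6Aux.lowerIDim_pos_eq F hφ.ne']
        exact csInf_le_csInf (Stmt6Aux.bdd_H F) hSφne (Stmt6Aux.Sset_subset_Hset F φ)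
      · rw [show lowerIDim F 0 + (1 - 0/φ) * ((n:ℝ) - lowerIDim F 0) = (n:ℝ) by
          rw [zero_div]; ring]
        rw [Stmt6Aux.lowerIDim_pos_eq F hφ.ne']
        exact hble
    · -- 0 < θ
      have hθ1 : θ ≤ 1 := le_trans hθφ.le h1
      have hSθne : (Stmt6Aux.Sset F θ).Nonempty :=
        ⟨(n:ℝ)+1, Stmt6Aux.mem_S_of_gt n hn F hF θ hθpos hθ1 _ (by linarith)⟩
      rw [Stmt6Aux.lowerIDim_pos_eq F hθpos.ne', Stmt6Aux.lowerIDim_pos_eq F hφ.ne']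
      constructor
      · exact csInf_le_csInf (Stmt6Aux.bdd_S F θ) hSφne
          (Stmt6Aux.Sset_anti F θ φ hθpos hθφ.le)
      · set a := sInf (Stmt6Aux.Sset F θ) with hadef
        have hr0 : 0 < θ/φ := div_pos hθpos hφ
        have hr1 : θ/φ ≤ 1 := by rw [div_le_one hφ]; exact hθφ.le
        apply _root_.le_of_forall_pos_le_add
        intro η hη
        rcases le_total (a + η) (n:ℝ) with hcase | hcase
        · obtain ⟨s, hsmem, hslt⟩ := exists_lt_of_csInf_lt hSθne
            (show sInf (Stmt6Aux.Sset F θ) < a + η by rw [← hadef]; linarith)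
          have hs' : (a+η) ∈ Stmt6Aux.Sset F θ :=
            Stmt6Aux.up_closed F θ hθpos hsmem hslt.le
          have ht := Stmt6Aux.main_step n hn F θ φ hθpos hθφ h1 (a+η) hs'.1 hcase hs'
          have hb := csInf_le (Stmt6Aux.bdd_S F φ) ht
          have hmul : θ/φ * η ≤ η := mul_le_of_le_one_left hη.le hr1
          have hexpand : θ/φ*(a+η) + (1-θ/φ)*(n:ℝ) = θ/φ*a + (1-θ/φ)*(n:ℝ) + θ/φ*η := by ring
          have hg : a + (1-θ/φ)*((n:ℝ)-a) + η = θ/φ*a + (1-θ/φ)*(n:ℝ) + η := by ring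
          rw [hg]
          rw [hexpand] at hb
          linarith
        · have hg : a + (1-θ/φ)*((n:ℝ)-a) + η
              = (n:ℝ) + (θ/φ)*(a + η - (n:ℝ)) + (1-θ/φ)*η := by ring
          rw [hg]
          have h2 : 0 ≤ (θ/φ)*(a+η-(n:ℝ)) := mul_nonneg hr0.le (by linarith)
          have h3 : 0 ≤ (1-θ/φ)*η := mul_nonneg (by linarith) hη.le
          linarith
end

section
/- Let F be a non-empty bounded subset of ℝⁿ and 0 ≤ θ < φ ≤ 1. Then the upper θ-intermediate dimension of F is at most the upper φ-intermediate dimension of F, which is at most (upper θ-intermediate dimension of F) + (1 − θ/φ)(n − upper θ-intermediate dimension of F). In particular, θ ↦ upper θ-intermediate dimension of F is continuous on (0,1]. -/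
open Set

open Metric MeasureTheory

noncomputable section AuxProofs


lemma euclid_nontrivial {n : ℕ} (hn : 1 ≤ n) : Nontrivial (EuclideanSpace ℝ (Fin n)) := by
  apply Module.nontrivial_of_finrank_pos (R := ℝ)
  rw [finrank_euclideanSpace_fin]; omega

lemma ediam_closedBall_eq {n : ℕ} (hn : 1 ≤ n) (x : EuclideanSpace ℝ (Fin n)) {r : ℝ}
    (hr : 0 ≤ r) : EMetric.diam (closedBall x r) = ENNReal.ofReal (2 * r) := by
  haveI := euclid_nontrivial hn
  apply le_antisymm
  · apply EMetric.diam_le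
    intro a ha b hb
    rw [edist_dist]
    apply ENNReal.ofReal_le_ofReal
    calc dist a b ≤ dist a x + dist x b := dist_triangle a x b
    _ ≤ r + r := by
        rw [mem_closedBall] at ha hb
        rw [dist_comm x b]; exact add_le_add ha hb
    _ = 2 * r := by ring
  · obtain ⟨v, hv⟩ := exists_norm_eq (EuclideanSpace ℝ (Fin n)) hr
    have h1 : x - v ∈ closedBall x r := by
      simp [mem_closedBall, dist_eq_norm, hv]
    have h2 : x + v ∈ closedBall x r := by
      simp [mem_closedBall, dist_eq_norm, hv]
    calc ENNReal.ofReal (2 * r) = edist (x - v) (x + v) := by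
          rw [edist_dist, dist_eq_norm]
          congr 1
          have h3 : x - v - (x + v) = -((2:ℝ) • v) := by module
          rw [h3, norm_neg, norm_smul, hv]
          simp
    _ ≤ EMetric.diam (closedBall x r) := EMetric.edist_le_diam_of_mem h1 h2


lemma cover_ball_count {n : ℕ} (hn : 1 ≤ n) {R ρ : ℝ} (hρ : 0 < ρ) (hρR : ρ ≤ R)
    (U : Set (EuclideanSpace ℝ (Fin n))) (hU : EMetric.diam U ≤ ENNReal.ofReal R) :
    ∃ t : Finset (EuclideanSpace ℝ (Fin n)),
      (U ⊆ ⋃ x ∈ t, closedBall x ρ) ∧ ((t.card : ℝ) ≤ (4 * R / ρ) ^ n) := by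
  haveI : Nontrivial (EuclideanSpace ℝ (Fin n)) := by
    apply Module.nontrivial_of_finrank_pos (R := ℝ)
    rw [finrank_euclideanSpace_fin]; omega
  have hR : 0 < R := lt_of_lt_of_le hρ hρR
  rcases U.eq_empty_or_nonempty with rfl | ⟨x₀, hx₀⟩
  · exact ⟨∅, by simp, by simp; positivity⟩
  have hsub : U ⊆ closedBall x₀ R := by
    intro y hy
    rw [mem_closedBall, ← ENNReal.ofReal_le_ofReal_iff hR.le, ← edist_dist]
    exact le_trans (EMetric.edist_le_diam_of_mem hy hx₀) hU
  -- maximal ρ-separated subset via Zorn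
  set 𝒮 : Set (Set (EuclideanSpace ℝ (Fin n))) :=
    {T | T ⊆ U ∧ T.Pairwise fun a b => ρ ≤ dist a b} with h𝒮
  obtain ⟨S, hS⟩ : ∃ S, Maximal (· ∈ 𝒮) S := by
    apply zorn_subset
    intro c hc hchain
    refine ⟨⋃₀ c, ⟨?_, ?_⟩, fun s hs => subset_sUnion_of_mem hs⟩
    · exact sUnion_subset fun s hs => (hc hs).1
    · intro a ha b hb hab
      obtain ⟨s, hs, has⟩ := ha
      obtain ⟨s', hs', hbs⟩ := hb
      rcases hchain.total hs hs' with h | h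
      · exact (hc hs').2 (h has) hbs hab
      · exact (hc hs).2 has (h hbs) hab
  have hSU : S ⊆ U := hS.prop.1
  have hSsep := hS.prop.2
  -- card bound on finite subsets
  have key : ∀ T : Finset (EuclideanSpace ℝ (Fin n)), ↑T ⊆ S →
      (T.card : ℝ) ≤ (4 * R / ρ) ^ n := by
    intro T hT
    have hdisj : (↑T : Set (EuclideanSpace ℝ (Fin n))).PairwiseDisjoint
        (fun x => ball x (ρ / 2)) := by
      intro a ha b hb hab
      exact ball_disjoint_ball (by linarith [hSsep (hT ha) (hT hb) hab])
    have hmeas := measure_biUnion_finset (μ := volume) hdisj fun x _ => measurableSet_ball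
    have hincl : (⋃ x ∈ T, ball x (ρ / 2)) ⊆ closedBall x₀ (2 * R) := by
      refine iUnion₂_subset fun x hx => ?_
      intro y hy
      have h1 : dist x x₀ ≤ R := hsub (hSU (hT hx))
      have h2 : dist y x < ρ / 2 := hy
      rw [mem_closedBall]
      calc dist y x₀ ≤ dist y x + dist x x₀ := dist_triangle _ _ _
        _ ≤ 2 * R := by linarith
    have hvol : ∀ x : EuclideanSpace ℝ (Fin n),
        volume (ball x (ρ / 2)) = ENNReal.ofReal ((ρ/2) ^ n) * volume (ball (0:EuclideanSpace ℝ (Fin n)) 1) := by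
      intro x
      rw [Measure.addHaar_ball volume x (by positivity : (0:ℝ) ≤ ρ/2), finrank_euclideanSpace_fin]
    have hvol2 : volume (closedBall x₀ (2*R)) = ENNReal.ofReal ((2*R) ^ n) * volume (ball (0:EuclideanSpace ℝ (Fin n)) 1) := by
      rw [Measure.addHaar_closedBall volume x₀ (by positivity : (0:ℝ) ≤ 2*R), finrank_euclideanSpace_fin]
    have hle : (T.card : ENNReal) * (ENNReal.ofReal ((ρ/2) ^ n) * volume (ball (0:EuclideanSpace ℝ (Fin n)) 1))
        ≤ ENNReal.ofReal ((2*R) ^ n) * volume (ball (0:EuclideanSpace ℝ (Fin n)) 1) := by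
      rw [← hvol2]
      calc (T.card : ENNReal) * (ENNReal.ofReal ((ρ/2) ^ n) * volume (ball (0:EuclideanSpace ℝ (Fin n)) 1))
          = ∑ x ∈ T, volume (ball x (ρ/2)) := by
            rw [Finset.sum_congr rfl fun x _ => hvol x, Finset.sum_const, nsmul_eq_mul]
        _ = volume (⋃ x ∈ T, ball x (ρ/2)) := hmeas.symm
        _ ≤ volume (closedBall x₀ (2*R)) := measure_mono hincl
    rw [← mul_assoc, ENNReal.mul_le_mul_iff_left (measure_ball_pos _ _ one_pos).ne'
      measure_ball_lt_top.ne] at hle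
    have hle2 : (T.card : ℝ) * ((ρ/2) ^ n) ≤ (2*R) ^ n := by
      rw [← ENNReal.ofReal_le_ofReal_iff (by positivity), ENNReal.ofReal_mul (by positivity)]
      rw [ENNReal.ofReal_natCast]
      exact hle
    rw [show (4 * R / ρ) ^ n = (2*R)^n / ((ρ/2)^n) by rw [← div_pow]; congr 1; field_simp; ring]
    rw [le_div_iff₀ (by positivity)]
    exact hle2
  have hSfin : S.Finite := by
    by_contra hinf
    have hinf' : S.Infinite := hinf
    obtain ⟨T, hTS, hTcard⟩ := hinf'.exists_subset_card_eq
      (⌈(4 * R / ρ) ^ n⌉₊ + 1)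
    have := key T hTS
    rw [hTcard] at this
    have h2 : ((4 * R / ρ) ^ n : ℝ) ≤ ⌈(4 * R / ρ) ^ n⌉₊ := Nat.le_ceil _
    push_cast at this
    linarith
  refine ⟨hSfin.toFinset, ?_, by simpa using key hSfin.toFinset (by simp)⟩
  intro y hy
  by_contra hnot
  simp only [mem_iUnion, Set.Finite.mem_toFinset, exists_prop, not_exists, not_and,
    mem_closedBall] at hnot
  have hfar : ∀ x ∈ S, ρ ≤ dist y x := fun x hx => le_of_lt (lt_of_not_ge (hnot x hx))
  have hyS : y ∉ S := by
    intro h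
    have := hfar y h
    rw [dist_self] at this
    linarith
  have hmem : insert y S ∈ 𝒮 := by
    refine ⟨insert_subset hy hSU, ?_⟩
    intro a ha b hb hab
    rcases ha with rfl | ha
    · rcases hb with rfl | hb
      · exact absurd rfl hab
      · exact hfar b hb
    · rcases hb with rfl | hb
      · rw [dist_comm]; exact hfar a ha
      · exact hSsep ha hb hab
  exact hyS (hS.2 hmem (subset_insert y S) (mem_insert y S))


def ISetU {X : Type} [PseudoEMetricSpace X] (F : Set X) (θ : ℝ) : Set ℝ :=
  {s : ℝ | 0 ≤ s ∧ ∀ ε > 0, ∃ δ₀ > (0:ℝ), ∀ δ : ℝ, 0 < δ → δ ≤ δ₀ →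
    ICov F s (δ ^ (1 / θ)) δ ε}

def HSet {X : Type} [PseudoEMetricSpace X] (F : Set X) : Set ℝ :=
  {s : ℝ | 0 ≤ s ∧ ∀ ε > 0, HCov F s ε}

lemma upperIDim_of_ne {X : Type} [PseudoEMetricSpace X] (F : Set X) {θ : ℝ} (h : θ ≠ 0) :
    upperIDim F θ = sInf (ISetU F θ) := if_neg h

lemma upperIDim_of_zero {X : Type} [PseudoEMetricSpace X] (F : Set X) :
    upperIDim F 0 = sInf (HSet F) := if_pos rfl

/-- A cover of a set by finitely many closed balls of radius `r/2` gives an `ICov`-style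
family with all diameters equal to `r`, and the sum bound reduces to a real inequality. -/
lemma ICov_of_finset {n : ℕ} (hn : 1 ≤ n) {F' : Set (EuclideanSpace ℝ (Fin n))}
    {tset : Finset (EuclideanSpace ℝ (Fin n))} {r : ℝ} (hr : 0 < r)
    (hcov : F' ⊆ ⋃ x ∈ tset, closedBall x (r/2)) {t lo ε : ℝ}
    (hlo : lo ≤ r) (hsum : (tset.card : ℝ) * r ^ t ≤ ε) :
    ICov F' t lo r ε := by
  refine ⟨{x // x ∈ tset}, inferInstance, fun x => closedBall x.1 (r/2), ?_, ?_, ?_⟩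
  · intro y hy
    obtain ⟨x, hx, hyx⟩ := mem_iUnion₂.1 (hcov hy)
    exact mem_iUnion.2 ⟨⟨x, hx⟩, hyx⟩
  · intro i
    rw [ediam_closedBall_eq hn _ (by positivity), show 2*(r/2) = r by ring]
    exact ⟨ENNReal.ofReal_le_ofReal hlo, le_refl _⟩
  · have hdiam : ∀ i : {x // x ∈ tset},
        EMetric.diam (closedBall i.1 (r/2)) ^ t = ENNReal.ofReal (r ^ t) := by
      intro i
      rw [ediam_closedBall_eq hn _ (by positivity), show 2*(r/2) = r by ring,
        ENNReal.ofReal_rpow_of_pos hr]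
    rw [tsum_congr hdiam, tsum_fintype]
    rw [Finset.sum_const, Finset.card_univ, Fintype.card_coe, nsmul_eq_mul]
    calc (tset.card : ENNReal) * ENNReal.ofReal (r ^ t)
        = ENNReal.ofReal ((tset.card : ℝ) * r ^ t) := by
          rw [ENNReal.ofReal_mul (by positivity), ENNReal.ofReal_natCast]
      _ ≤ ENNReal.ofReal ε := ENNReal.ofReal_le_ofReal hsum

lemma top_mem {n : ℕ} (hn : 1 ≤ n) {F : Set (EuclideanSpace ℝ (Fin n))}
    (hF : Bornology.IsBounded F) {θ t : ℝ} (hθ : 0 < θ) (hθ1 : θ ≤ 1) (ht : (n:ℝ) < t) :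
    t ∈ ISetU F θ := by
  have htpos : 0 ≤ t := le_trans (Nat.cast_nonneg n) ht.le
  refine ⟨htpos, ?_⟩
  intro ε hε
  set R := max (Metric.diam F) 1 with hR
  have hR1 : (1:ℝ) ≤ R := le_max_right _ _
  have hR0 : (0:ℝ) < R := lt_of_lt_of_le one_pos hR1
  set K : ℝ := (8 * R)^n with hK
  have hK0 : 0 < K := by positivity
  refine ⟨min 1 ((ε/K) ^ (1/(t - n))), lt_min one_pos (Real.rpow_pos_of_pos (by positivity) _), ?_⟩
  intro Δ hΔ0 hΔle
  have hΔ1 : Δ ≤ 1 := le_trans hΔle (min_le_left _ _)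
  have hdiamF : EMetric.diam F ≤ ENNReal.ofReal R := by
    rw [← ENNReal.ofReal_toReal (a := EMetric.diam F) hF.ediam_ne_top]
    exact ENNReal.ofReal_le_ofReal (le_max_left _ _)
  obtain ⟨tset, hcov, hcard⟩ := cover_ball_count hn (by positivity : (0:ℝ) < Δ/2)
    (by linarith : Δ/2 ≤ R) F hdiamF
  have hlo : Δ ^ (1/θ) ≤ Δ := by
    calc Δ ^ (1/θ) ≤ Δ ^ (1:ℝ) :=
          Real.rpow_le_rpow_of_exponent_ge hΔ0 hΔ1 (by rw [le_div_iff₀ hθ]; linarith)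
    _ = Δ := Real.rpow_one Δ
  have hsum : (tset.card : ℝ) * Δ ^ t ≤ ε := by
    have h1 : (tset.card : ℝ) ≤ K / Δ ^ (n:ℝ) := by
      calc (tset.card : ℝ) ≤ (4 * R / (Δ/2)) ^ n := hcard
      _ = K / Δ ^ (n:ℝ) := by
          rw [Real.rpow_natCast, hK, ← div_pow]
          congr 1
          field_simp
          ring
    have h2 : Δ ^ (t - (n:ℝ)) ≤ ε / K := by
      calc Δ ^ (t - (n:ℝ)) ≤ ((ε/K) ^ (1/(t-n))) ^ (t - (n:ℝ)) := by
            apply Real.rpow_le_rpow hΔ0.le (le_trans hΔle (min_le_right _ _)) (by linarith)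
      _ = ε / K := by
          rw [← Real.rpow_mul (by positivity), one_div, inv_mul_cancel₀ (by linarith), Real.rpow_one]
    calc (tset.card : ℝ) * Δ ^ t ≤ (K / Δ ^ (n:ℝ)) * Δ ^ t := by
          apply mul_le_mul_of_nonneg_right h1 (Real.rpow_nonneg hΔ0.le t)
      _ = K * Δ ^ (t - (n:ℝ)) := by
          rw [Real.rpow_sub hΔ0]; ring
      _ ≤ K * (ε / K) := by nlinarith
      _ = ε := by field_simp
  exact ICov_of_finset hn hΔ0 hcov hlo hsum

lemma main_mem {n : ℕ} (hn : 1 ≤ n) {F : Set (EuclideanSpace ℝ (Fin n))}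
    {θ φ s : ℝ} (hθ : 0 < θ) (hθφ : θ < φ) (hφ1 : φ ≤ 1)
    (hs : s ∈ ISetU F θ) (hsn : s ≤ n) :
    ((n:ℝ) - (θ/φ) * ((n:ℝ) - s)) ∈ ISetU F φ := by
  obtain ⟨hs0, hsmem⟩ := hs
  have hφ : 0 < φ := lt_trans hθ hθφ
  obtain ⟨t, htdef⟩ : ∃ t : ℝ, t = (n:ℝ) - (θ/φ) * ((n:ℝ) - s) := ⟨_, rfl⟩
  rw [← htdef]
  have hst : s ≤ t := by
    have h1 : θ/φ ≤ 1 := by rw [div_le_one hφ]; linarith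
    have h2 : (θ/φ) * ((n:ℝ) - s) ≤ (n:ℝ) - s := by nlinarith [sub_nonneg.2 hsn]
    rw [htdef]; linarith
  have ht0 : 0 ≤ t := le_trans hs0 hst
  refine ⟨ht0, ?_⟩
  intro ε' hε'
  obtain ⟨K, hKdef⟩ : ∃ K : ℝ, K = (8:ℝ)^n := ⟨_, rfl⟩
  have hK1 : (1:ℝ) ≤ K := by
    rw [hKdef]
    simpa using pow_le_pow_left₀ (by norm_num : (0:ℝ) ≤ 1) (by norm_num : (1:ℝ) ≤ 8) n
  have hK0 : (0:ℝ) < K := by positivity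
  obtain ⟨δ₀₀, hδ₀₀, hδprop⟩ := hsmem (ε'/K) (by positivity)
  set δ₀ : ℝ := min δ₀₀ 1 with hδ₀def
  have hδ₀pos : 0 < δ₀ := lt_min hδ₀₀ one_pos
  refine ⟨δ₀ ^ (φ/θ), Real.rpow_pos_of_pos hδ₀pos _, ?_⟩
  intro Δ hΔ0 hΔle
  obtain ⟨δ, hδdef⟩ : ∃ d : ℝ, d = Δ ^ (θ/φ) := ⟨_, rfl⟩
  have hδ0 : 0 < δ := hδdef ▸ Real.rpow_pos_of_pos hΔ0 _
  have hδle : δ ≤ δ₀ := by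
    calc δ ≤ (δ₀ ^ (φ/θ)) ^ (θ/φ) := by
          rw [hδdef]
          exact Real.rpow_le_rpow hΔ0.le hΔle (by positivity)
    _ = δ₀ := by
        rw [← Real.rpow_mul hδ₀pos.le, show (φ/θ)*(θ/φ) = 1 by field_simp, Real.rpow_one]
  have hδ1 : δ ≤ 1 := le_trans hδle (min_le_right _ _)
  have hΔeq : δ ^ (φ/θ) = Δ := by
    rw [hδdef, ← Real.rpow_mul hΔ0.le, show (θ/φ)*(φ/θ) = 1 by field_simp, Real.rpow_one]
  have hloeq : δ ^ (1/θ) = Δ ^ (1/φ) := by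
    rw [hδdef, ← Real.rpow_mul hΔ0.le]
    congr 1
    field_simp
  have hΔ1 : Δ ≤ 1 := by
    rw [← hΔeq]; exact Real.rpow_le_one hδ0.le hδ1 (by positivity)
  obtain ⟨ι, hι, U, hcov, hdiam, hsum⟩ := hδprop δ hδ0 (le_trans hδle (min_le_left _ _))
  haveI : Countable ι := hι
  have hfin : ∀ i, EMetric.diam (U i) ≠ ⊤ := fun i =>
    ne_top_of_le_ne_top ENNReal.ofReal_ne_top (hdiam i).2
  set r : ι → ℝ := fun i => (EMetric.diam (U i)).toReal with hrdef
  have hrd : ∀ i, EMetric.diam (U i) = ENNReal.ofReal (r i) := fun i =>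
    (ENNReal.ofReal_toReal (hfin i)).symm
  have hrlo : ∀ i, δ ^ (1/θ) ≤ r i := by
    intro i
    have h := (hdiam i).1
    rw [hrd i] at h
    exact (ENNReal.ofReal_le_ofReal_iff ENNReal.toReal_nonneg).1 h
  have hrpos : ∀ i, 0 < r i := fun i => lt_of_lt_of_le (Real.rpow_pos_of_pos hδ0 _) (hrlo i)
  have hrhi : ∀ i, r i ≤ δ := by
    intro i
    have h := (hdiam i).2
    rw [hrd i] at h
    exact (ENNReal.ofReal_le_ofReal_iff hδ0.le).1 h
  have hexists : ∀ i, ∃ (κ : Type) (_ : Countable κ)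
      (V : κ → Set (EuclideanSpace ℝ (Fin n))), (U i ⊆ ⋃ j, V j) ∧
      (∀ j, ENNReal.ofReal (Δ ^ (1/φ)) ≤ EMetric.diam (V j) ∧
        EMetric.diam (V j) ≤ ENNReal.ofReal Δ) ∧
      ∑' j, EMetric.diam (V j) ^ t ≤ ENNReal.ofReal (K * (r i) ^ s) := by
    intro i
    rcases le_or_gt (r i) Δ with hle | hgt
    · refine ⟨Unit, inferInstance, fun _ => U i,
        fun y hy => mem_iUnion.2 ⟨(), hy⟩, ?_, ?_⟩
      · intro j
        refine ⟨?_, ?_⟩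
        · rw [← hloeq]; exact (hdiam i).1
        · rw [hrd i]; exact ENNReal.ofReal_le_ofReal hle
      · have huniq : ∑' (_ : Unit), EMetric.diam (U i) ^ t = EMetric.diam (U i) ^ t := by
          rw [tsum_fintype]; simp
        rw [huniq, hrd i, ENNReal.ofReal_rpow_of_pos (hrpos i)]
        apply ENNReal.ofReal_le_ofReal
        have h1 : (r i) ^ t ≤ (r i) ^ s :=
          Real.rpow_le_rpow_of_exponent_ge (hrpos i) (le_trans (hrhi i) hδ1) hst
        nlinarith [Real.rpow_pos_of_pos (hrpos i) s]
    · obtain ⟨tset, hcov', hcard⟩ := cover_ball_count hn (show (0:ℝ) < Δ/2 by positivity)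
        (by linarith : Δ/2 ≤ r i) (U i) (le_of_eq (hrd i))
      have hreal : (tset.card : ℝ) * Δ ^ t ≤ K * (r i) ^ s := by
        have hc2 : (tset.card : ℝ) ≤ K * (r i) ^ (n:ℝ) / Δ ^ (n:ℝ) := by
          calc (tset.card:ℝ) ≤ (4 * (r i) / (Δ/2))^n := hcard
          _ = K * (r i) ^ (n:ℝ) / Δ ^ (n:ℝ) := by
              rw [Real.rpow_natCast, Real.rpow_natCast, hKdef,
                show (4*(r i)/(Δ/2)) = 8 * (r i)/Δ by field_simp; ring, div_pow, mul_pow]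
        have hΔt : Δ ^ (t - (n:ℝ)) = δ ^ (s - (n:ℝ)) := by
          rw [← hΔeq, ← Real.rpow_mul hδ0.le]
          congr 1
          rw [htdef]
          field_simp
          ring
        have e1 : (r i)^(n:ℝ) = (r i)^s * (r i)^((n:ℝ)-s) := by
          rw [← Real.rpow_add (hrpos i)]
          congr 1
          ring
        have e2 : (r i)^((n:ℝ)-s) ≤ δ^((n:ℝ)-s) :=
          Real.rpow_le_rpow (hrpos i).le (hrhi i) (by linarith)
        have e3 : δ^((n:ℝ)-s) * δ^(s-(n:ℝ)) = 1 := by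
          rw [← Real.rpow_add hδ0, show ((n:ℝ)-s) + (s-(n:ℝ)) = 0 by ring, Real.rpow_zero]
        calc (tset.card : ℝ) * Δ ^ t ≤ (K * (r i)^(n:ℝ)/Δ^(n:ℝ)) * Δ^t :=
              mul_le_mul_of_nonneg_right hc2 (Real.rpow_nonneg hΔ0.le t)
        _ = K * (r i)^(n:ℝ) * (Δ^t / Δ^(n:ℝ)) := by ring
        _ = K * (r i)^(n:ℝ) * Δ^(t-(n:ℝ)) := by rw [Real.rpow_sub hΔ0]
        _ = K * ((r i)^s * ((r i)^((n:ℝ)-s) * δ^(s-(n:ℝ)))) := by rw [hΔt, e1]; ring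
        _ ≤ K * ((r i)^s * (δ^((n:ℝ)-s) * δ^(s-(n:ℝ)))) := by
              gcongr
        _ = K * (r i)^s := by rw [e3, mul_one]
      have hlo2 : Δ ^ (1/φ) ≤ Δ := by
        calc Δ ^ (1/φ) ≤ Δ ^ (1:ℝ) :=
              Real.rpow_le_rpow_of_exponent_ge hΔ0 hΔ1 (by rw [le_div_iff₀ hφ]; linarith)
        _ = Δ := Real.rpow_one Δ
      exact ICov_of_finset hn hΔ0 hcov' hlo2 hreal
  choose κ hκ V hcovV hdiamV hsumV using hexists
  haveI : ∀ i, Countable (κ i) := hκ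
  refine ⟨(Σ i, κ i), inferInstance, fun p => V p.1 p.2, ?_, fun p => hdiamV p.1 p.2, ?_⟩
  · intro y hy
    obtain ⟨Ui, ⟨i, rfl⟩, hi⟩ := hcov hy
    obtain ⟨Vj, ⟨j, rfl⟩, hj⟩ := hcovV i hi
    exact mem_iUnion.2 ⟨⟨i, j⟩, hj⟩
  · calc ∑' (p : Σ i, κ i), EMetric.diam (V p.1 p.2) ^ t
        = ∑' i, ∑' j, EMetric.diam (V i j) ^ t :=
          ENNReal.tsum_sigma (fun i j => EMetric.diam (V i j) ^ t)
    _ ≤ ∑' i, ENNReal.ofReal (K * (r i)^s) := ENNReal.tsum_le_tsum fun i => hsumV i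
    _ = ∑' i, ENNReal.ofReal K * (EMetric.diam (U i))^s := by
        refine tsum_congr fun i => ?_
        rw [hrd i, ENNReal.ofReal_rpow_of_pos (hrpos i), ← ENNReal.ofReal_mul hK0.le]
    _ = ENNReal.ofReal K * ∑' i, (EMetric.diam (U i))^s := ENNReal.tsum_mul_left
    _ ≤ ENNReal.ofReal K * ENNReal.ofReal (ε'/K) := mul_le_mul_right hsum _
    _ = ENNReal.ofReal ε' := by
        rw [← ENNReal.ofReal_mul hK0.le]
        congr 1
        field_simp

lemma le_of_forall_add' {a b : ℝ} (h : ∀ η > 0, a ≤ b + η) : a ≤ b := by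
  by_contra hc
  push_neg at hc
  have := h ((a-b)/2) (by linarith)
  linarith

lemma ISetU_mono {X : Type} [PseudoEMetricSpace X] (F : Set X) {θ φ : ℝ} (hθ : 0 < θ)
    (hθφ : θ ≤ φ) (hφ1 : φ ≤ 1) : ISetU F φ ⊆ ISetU F θ := by
  rintro s ⟨hs0, hmem⟩
  refine ⟨hs0, fun ε hε => ?_⟩
  obtain ⟨δ₀, hδ₀, hprop⟩ := hmem ε hε
  refine ⟨min δ₀ 1, lt_min hδ₀ one_pos, fun δ hδ0 hδle => ?_⟩
  obtain ⟨ι, hι, U, hcov, hdiam, hsum⟩ := hprop δ hδ0 (le_trans hδle (min_le_left _ _))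
  refine ⟨ι, hι, U, hcov, fun i => ⟨le_trans ?_ (hdiam i).1, (hdiam i).2⟩, hsum⟩
  apply ENNReal.ofReal_le_ofReal
  exact Real.rpow_le_rpow_of_exponent_ge hδ0 (le_trans hδle (min_le_right _ _))
    (one_div_le_one_div_of_le hθ hθφ)

lemma HSet_of_ISetU {X : Type} [PseudoEMetricSpace X] (F : Set X) {φ : ℝ} :
    ISetU F φ ⊆ HSet F := by
  rintro s ⟨hs0, hmem⟩
  refine ⟨hs0, fun ε hε => ?_⟩
  obtain ⟨δ₀, hδ₀, hprop⟩ := hmem ε hε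
  obtain ⟨ι, hι, U, hcov, _, hsum⟩ := hprop δ₀ hδ₀ le_rfl
  exact ⟨ι, hι, U, hcov, hsum⟩

lemma upperIDim_zero_of_point {F : Set (EuclideanSpace ℝ (Fin 0))} (hne : F.Nonempty)
    (θ : ℝ) : upperIDim F θ = 0 := by
  haveI : Subsingleton (EuclideanSpace ℝ (Fin 0)) :=
    ⟨fun a b => by ext i; exact absurd i.2 (by omega)⟩
  rcases eq_or_ne θ 0 with rfl | hθ
  · rw [upperIDim_of_zero]
    apply le_antisymm
    · apply le_of_forall_add'
      intro η hη
      rw [zero_add]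
      apply csInf_le ⟨0, fun x hx => hx.1⟩
      refine ⟨hη.le, fun ε hε => ?_⟩
      refine ⟨Unit, inferInstance, fun _ => univ, fun y hy => mem_iUnion.2 ⟨(), mem_univ y⟩, ?_⟩
      have h0 : EMetric.diam (univ : Set (EuclideanSpace ℝ (Fin 0))) = 0 :=
        EMetric.diam_subsingleton (Set.subsingleton_of_subsingleton)
      have : ∑' (_ : Unit), EMetric.diam (univ : Set (EuclideanSpace ℝ (Fin 0))) ^ η
          = (0:ENNReal) ^ η := by rw [tsum_fintype]; simp [h0]
      rw [this, ENNReal.zero_rpow_of_pos hη]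
      exact zero_le
    · exact Real.sInf_nonneg fun x hx => hx.1
  · rw [upperIDim_of_ne F hθ]
    have hempty : ISetU F θ = ∅ := by
      rw [eq_empty_iff_forall_notMem]
      rintro s ⟨hs0, hmem⟩
      obtain ⟨δ₀, hδ₀, hprop⟩ := hmem 1 one_pos
      obtain ⟨ι, hι, U, hcov, hdiam, _⟩ := hprop δ₀ hδ₀ le_rfl
      obtain ⟨x, hx⟩ := hne
      obtain ⟨Ui, ⟨i, rfl⟩, hxi⟩ := hcov hx
      have h1 := (hdiam i).1
      have h2 : EMetric.diam (U i) = 0 :=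
        EMetric.diam_subsingleton (Set.subsingleton_of_subsingleton)
      rw [h2, nonpos_iff_eq_zero, ENNReal.ofReal_eq_zero] at h1
      have := Real.rpow_pos_of_pos hδ₀ (1/θ)
      linarith
    rw [hempty, Real.sInf_empty]

lemma part_one {n : ℕ} {F : Set (EuclideanSpace ℝ (Fin n))} (hne : F.Nonempty)
    (hF : Bornology.IsBounded F) :
    ∀ θ φ : ℝ, 0 ≤ θ → θ < φ → φ ≤ 1 →
      upperIDim F θ ≤ upperIDim F φ ∧
        upperIDim F φ ≤ upperIDim F θ + (1 - θ / φ) * ((n : ℝ) - upperIDim F θ) := by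
  rcases Nat.eq_zero_or_pos n with rfl | hn
  · intro θ φ hθ0 hθφ hφ1
    rw [upperIDim_zero_of_point hne θ, upperIDim_zero_of_point hne φ]
    norm_num
  intro θ φ hθ0 hθφ hφ1
  have hφ : 0 < φ := lt_of_le_of_lt hθ0 hθφ
  have hφne : (ISetU F φ).Nonempty :=
    ⟨(n:ℝ)+1, top_mem hn hF hφ hφ1 (by linarith)⟩
  have hbddφ : BddBelow (ISetU F φ) := ⟨0, fun x hx => hx.1⟩
  have hveq : upperIDim F φ = sInf (ISetU F φ) := upperIDim_of_ne F hφ.ne'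
  have hvle : ∀ t : ℝ, (n:ℝ) < t → upperIDim F φ ≤ t := by
    intro t ht
    rw [hveq]
    exact csInf_le hbddφ (top_mem hn hF hφ hφ1 ht)
  have hvn : upperIDim F φ ≤ (n:ℝ) := by
    apply le_of_forall_add'
    intro η hη
    exact hvle _ (by linarith)
  rcases eq_or_lt_of_le hθ0 with rfl | hθ
  · have hueq : upperIDim F 0 = sInf (HSet F) := upperIDim_of_zero F
    have hu0 : 0 ≤ upperIDim F 0 := by
      rw [hueq]; exact Real.sInf_nonneg fun x hx => hx.1
    constructor
    · rw [hueq, hveq]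
      exact csInf_le_csInf ⟨0, fun x hx => hx.1⟩ hφne (HSet_of_ISetU F)
    · rw [zero_div]
      nlinarith [hvn, hu0]
  · have hθ1 : θ ≤ 1 := le_trans hθφ.le hφ1
    have hθne : (ISetU F θ).Nonempty :=
      ⟨(n:ℝ)+1, top_mem hn hF hθ hθ1 (by linarith)⟩
    have hbddθ : BddBelow (ISetU F θ) := ⟨0, fun x hx => hx.1⟩
    have hueq : upperIDim F θ = sInf (ISetU F θ) := upperIDim_of_ne F hθ.ne'
    have hu0 : 0 ≤ upperIDim F θ := by
      rw [hueq]; exact Real.sInf_nonneg fun x hx => hx.1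
    have hun : upperIDim F θ ≤ (n:ℝ) := by
      apply le_of_forall_add'
      intro η hη
      rw [hueq]
      exact le_trans (csInf_le hbddθ (top_mem hn hF hθ hθ1 (by linarith : (n:ℝ) < n + η)))
        le_rfl
    constructor
    · rw [hueq, hveq]
      exact csInf_le_csInf hbddθ hφne (ISetU_mono F hθ hθφ.le hφ1)
    · apply le_of_forall_add'
      intro η hη
      set u := upperIDim F θ with hudef
      have ha0 : 0 ≤ θ/φ := by positivity
      have ha1 : θ/φ ≤ 1 := by rw [div_le_one hφ]; linarith
      rcases eq_or_lt_of_le hun with h | hlt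
      · have h2 : (n:ℝ) - u = 0 := by rw [h]; ring
        rw [h2, mul_zero, add_zero]
        linarith
      · set η₂ := min η ((n:ℝ) - u) with hη₂def
        have hη₂pos : 0 < η₂ := lt_min hη (by linarith)
        obtain ⟨s, hsmem, hslt⟩ : ∃ s ∈ ISetU F θ, s < u + η₂ := by
          apply exists_lt_of_csInf_lt hθne
          rw [← hueq]; linarith
        have hs_le_n : s ≤ (n:ℝ) := by
          have := min_le_right η ((n:ℝ) - u)
          have := min_le_left η ((n:ℝ) - u)
          simp only [hη₂def] at hslt ⊢
          linarith [min_le_right η ((n:ℝ) - u)]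
        have hmem2 := main_mem hn hθ hθφ hφ1 hsmem hs_le_n
        have hv2 : upperIDim F φ ≤ (n:ℝ) - θ/φ*((n:ℝ) - s) := by
          rw [hveq]; exact csInf_le hbddφ hmem2
        have h3 : (θ/φ)*((n:ℝ) - u - η₂) ≤ (θ/φ)*((n:ℝ) - s) := by
          apply mul_le_mul_of_nonneg_left _ ha0
          linarith
        have h4 : (θ/φ)*η₂ ≤ η₂ := by nlinarith
        have h5 : η₂ ≤ η := min_le_left _ _
        nlinarith [hv2, h3, h4, h5]

lemma part_two {n : ℕ} {F : Set (EuclideanSpace ℝ (Fin n))} (hne : F.Nonempty)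
    (hF : Bornology.IsBounded F) :
    ContinuousOn (upperIDim F) (Set.Ioc (0:ℝ) 1) := by
  have hp1 := part_one hne hF
  have hf0 : ∀ x ∈ Set.Ioc (0:ℝ) 1, 0 ≤ upperIDim F x := by
    intro x hx
    rw [upperIDim_of_ne F (ne_of_gt hx.1)]
    exact Real.sInf_nonneg fun y hy => hy.1
  have hest : ∀ x y : ℝ, 0 < x → x < y → y ≤ 1 →
      0 ≤ upperIDim F y - upperIDim F x ∧
      (upperIDim F y - upperIDim F x) * y ≤ (n:ℝ) * (y - x) := by
    intro x y hx hxy hy1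
    obtain ⟨hm, hb⟩ := hp1 x y hx.le hxy hy1
    have hy0 : 0 < y := lt_trans hx hxy
    have hfx0 : 0 ≤ upperIDim F x := hf0 x ⟨hx, by linarith⟩
    refine ⟨by linarith, ?_⟩
    have h1 : 0 ≤ 1 - x/y := by
      have : x/y ≤ 1 := by rw [div_le_one hy0]; linarith
      linarith
    have h2 : (1 - x/y)*((n:ℝ) - upperIDim F x) ≤ (1-x/y)*(n:ℝ) := by
      apply mul_le_mul_of_nonneg_left _ h1
      linarith
    have h3 : (upperIDim F y - upperIDim F x) ≤ (1-x/y)*(n:ℝ) := by linarith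
    have h4 : (1-x/y)*(n:ℝ)*y = (n:ℝ)*(y-x) := by field_simp
    calc (upperIDim F y - upperIDim F x) * y ≤ (1-x/y)*(n:ℝ)*y :=
          mul_le_mul_of_nonneg_right h3 hy0.le
    _ = (n:ℝ)*(y-x) := h4
  intro a ha
  rw [Metric.continuousWithinAt_iff]
  intro ε hε
  obtain ⟨ha0, ha1⟩ := ha
  refine ⟨min (a/2) (a*ε/(2*(n:ℝ)+1)), lt_min (by linarith) (by positivity), ?_⟩
  intro x hx hdist
  rw [Real.dist_eq] at hdist ⊢
  have hδ2 : |x - a| < a*ε/(2*(n:ℝ)+1) := lt_of_lt_of_le hdist (min_le_right _ _)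
  have hn0 : (0:ℝ) ≤ n := Nat.cast_nonneg n
  have habs := abs_lt.1 hδ2
  have hkey : ∀ d : ℝ, 0 ≤ d → d * a ≤ (n:ℝ) * (a*ε/(2*(n:ℝ)+1)) → |d| < ε := by
    intro d hd0 hda
    rw [abs_of_nonneg hd0]
    have h7 : (n:ℝ) * (a*ε/(2*(n:ℝ)+1)) * (2*(n:ℝ)+1) = (n:ℝ)*a*ε := by
      field_simp
    have h6 : d * a * (2*(n:ℝ)+1) ≤ (n:ℝ)*a*ε := by nlinarith
    nlinarith [mul_pos ha0 hε, mul_nonneg (mul_nonneg hn0 ha0.le) hε.le]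
  rcases lt_trichotomy x a with h | h | h
  · obtain ⟨hd0, hd⟩ := hest x a hx.1 h ha1
    have h8 : (upperIDim F a - upperIDim F x) * a ≤ (n:ℝ)*(a*ε/(2*(n:ℝ)+1)) := by
      nlinarith [habs.1]
    rw [abs_sub_comm]
    exact hkey _ hd0 h8
  · rw [h]
    simpa using hε
  · obtain ⟨hd0, hd⟩ := hest a x ha0 h hx.2
    have h8 : (upperIDim F x - upperIDim F a) * a ≤ (n:ℝ)*(a*ε/(2*(n:ℝ)+1)) := by
      nlinarith [mul_le_mul_of_nonneg_left (le_of_lt h) hd0, habs.2]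
    exact hkey _ hd0 h8


end AuxProofs

theorem stmt7 (n : ℕ) (F : Set (EuclideanSpace ℝ (Fin n))) (hne : F.Nonempty)
    (hF : Bornology.IsBounded F) :
    (∀ θ φ : ℝ, 0 ≤ θ → θ < φ → φ ≤ 1 →
      upperIDim F θ ≤ upperIDim F φ ∧
        upperIDim F φ ≤ upperIDim F θ + (1 - θ / φ) * ((n : ℝ) - upperIDim F θ)) ∧
    ContinuousOn (upperIDim F) (Set.Ioc (0:ℝ) 1) :=
  ⟨part_one hne hF, part_two hne hF⟩
end

section
/- Frostman-type lemma for intermediate dimensions: Let F ⊆ ℝⁿ be compact, θ ∈ (0,1], and 0 < s < lower θ-intermediate dimension of F. Then there exists c > 0 such that for every δ ∈ (0,1) there is a Borel probability measure μ_δ supported on F (which may be taken to be a finite sum of atoms) satisfying μ_δ(B(x,r)) ≤ c·r^s for all x ∈ ℝⁿ and all δ^{1/θ} ≤ r ≤ δ. -/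
open Set

namespace SF
open Finset Metric MeasureTheory
open scoped ENNReal

open Finset
open scoped ENNReal

section Abstract
variable {ι κ : Type} [Fintype ι] [DecidableEq κ]

noncomputable def csum (k : ℕ → ι → κ) (t : ℕ) (f : ι → ℝ≥0∞) (u : ι) : ℝ≥0∞ :=
  ∑ v ∈ univ.filter (fun v => k t v = k t u), f v

noncomputable def W (k : ℕ → ι → κ) (p : ℕ → ℝ≥0∞) : ℕ → ι → ℝ≥0∞
  | 0 => fun _ => p 0
  | (t+1) => fun u => W k p t u * min 1 (p (t+1) / csum k (t+1) (W k p t) u)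

variable {k : ℕ → ι → κ} {p : ℕ → ℝ≥0∞}

lemma W_succ_le (t : ℕ) (u : ι) : W k p (t+1) u ≤ W k p t u := by
  rw [W]; exact mul_le_of_le_one_right' (min_le_left _ _)

lemma W_add_le (t d : ℕ) (u : ι) : W k p (t + d) u ≤ W k p t u := by
  induction d with
  | zero => exact le_rfl
  | succ d ih => exact (W_succ_le _ _).trans ih

lemma W_mono {t t' : ℕ} (h : t ≤ t') (u : ι) : W k p t' u ≤ W k p t u := by
  obtain ⟨d, rfl⟩ := Nat.exists_eq_add_of_le h
  exact W_add_le t d u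

lemma W_le_p0 (t : ℕ) (u : ι) : W k p t u ≤ p 0 := by
  have h := W_add_le (k := k) (p := p) 0 t u
  rw [Nat.zero_add] at h
  exact h

lemma csum_congr {t : ℕ} {f : ι → ℝ≥0∞} {u v : ι} (h : k t u = k t v) :
    csum k t f u = csum k t f v := by
  unfold csum
  congr 1
  apply Finset.filter_congr
  intro w _
  simp [h]

lemma csum_ne_top (hp0 : p 0 ≠ ∞) {t t' : ℕ} {u : ι} : csum k t (W k p t') u ≠ ∞ := by
  refine (ENNReal.sum_lt_top.2 ?_).ne
  intro v _
  exact lt_of_le_of_lt (W_le_p0 _ _) hp0.lt_top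

lemma mul_min_div (S q : ℝ≥0∞) (hS : S ≠ ∞) (hq : q ≠ 0) :
    S * min 1 (q / S) = min S q := by
  rcases eq_or_ne S 0 with h | h
  · simp [h, ENNReal.div_zero hq]
  rcases le_total S q with h2 | h2
  · have h1 : (1:ℝ≥0∞) ≤ q / S := by
      rw [ENNReal.le_div_iff_mul_le (Or.inl h) (Or.inl hS), one_mul]; exact h2
    rw [min_eq_left h1, mul_one, min_eq_left h2]
  · have h1 : q / S ≤ 1 := by
      refine ENNReal.div_le_of_le_mul ?_
      rwa [one_mul]
    rw [min_eq_right h1, ENNReal.mul_div_cancel h hS, min_eq_right h2]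

lemma csum_succ_eq (hp0 : p 0 ≠ ∞) (hpt : ∀ t, p t ≠ 0) (t : ℕ) (u : ι) :
    csum k (t+1) (W k p (t+1)) u = min (csum k (t+1) (W k p t) u) (p (t+1)) := by
  have hS : csum k (t+1) (W k p t) u ≠ ∞ := csum_ne_top hp0
  calc csum k (t+1) (W k p (t+1)) u
      = ∑ v ∈ univ.filter (fun v => k (t+1) v = k (t+1) u),
          W k p t v * min 1 (p (t+1) / csum k (t+1) (W k p t) u) := by
        refine sum_congr rfl fun v hv => ?_
        rw [W]
        dsimp only
        rw [csum_congr (mem_filter.mp hv).2]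
    _ = (csum k (t+1) (W k p t) u) * min 1 (p (t+1) / csum k (t+1) (W k p t) u) := by
        rw [csum, ← sum_mul]
    _ = min (csum k (t+1) (W k p t) u) (p (t+1)) := mul_min_div _ _ hS (hpt _)

lemma filter_k0_eq (hk0 : Function.Injective (k 0)) (u : ι) :
    univ.filter (fun v => k 0 v = k 0 u) = {u} := by
  ext w
  simp [hk0.eq_iff]

lemma csum_le (hk0 : Function.Injective (k 0)) (hp0 : p 0 ≠ ∞) (hpt : ∀ t, p t ≠ 0)
    {t t' : ℕ} (h : t ≤ t') (u : ι) : csum k t (W k p t') u ≤ p t := by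
  have h1 : csum k t (W k p t') u ≤ csum k t (W k p t) u :=
    sum_le_sum fun v _ => W_mono h v
  refine h1.trans ?_
  cases t with
  | zero =>
    rw [csum, filter_k0_eq hk0, sum_singleton]
    exact le_rfl
  | succ t =>
    rw [csum_succ_eq hp0 hpt]
    exact min_le_right _ _

lemma one_le_div_of_le {S q : ℝ≥0∞} (hq : q ≠ 0) (hS : S ≠ ∞) (h : S ≤ q) : 1 ≤ q / S := by
  rw [ENNReal.le_div_iff_mul_le (Or.inr hq) (Or.inl hS), one_mul]; exact h

lemma saturation (hk0 : Function.Injective (k 0))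
    (hcoar : ∀ {a b : ℕ} {u v : ι}, a ≤ b → k a u = k a v → k b u = k b v)
    (hp0 : p 0 ≠ ∞) (hpt : ∀ t, p t ≠ 0) (T : ℕ) (u : ι) :
    ∃ r, r ≤ T ∧ csum k r (W k p T) u = p r := by
  classical
  set D := (Finset.range T).filter (fun t => p (t+1) < csum k (t+1) (W k p t) u) with hD
  rcases D.eq_empty_or_nonempty with hDe | hDne
  · refine ⟨0, Nat.zero_le T, ?_⟩
    have hW : ∀ t, t ≤ T → W k p t u = p 0 := by
      intro t ht
      induction t with
      | zero => rfl
      | succ t ih =>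
        have ht' : t < T := ht
        have hle : csum k (t+1) (W k p t) u ≤ p (t+1) := by
          by_contra hc
          have : t ∈ D := mem_filter.2 ⟨mem_range.2 ht', not_le.1 hc⟩
          simp [hDe] at this
        have hone : (1:ℝ≥0∞) ≤ p (t+1) / csum k (t+1) (W k p t) u :=
          one_le_div_of_le (hpt _) (csum_ne_top hp0) hle
        rw [W]
        dsimp only
        rw [min_eq_left hone, mul_one]
        exact ih (le_of_lt ht')
    rw [csum, filter_k0_eq hk0, sum_singleton, hW T le_rfl]
  · set d := D.max' hDne with hd
    have hdD : d ∈ D := D.max'_mem hDne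
    have hdT : d < T := mem_range.1 (mem_filter.1 hdD).1
    have hdlt : p (d+1) < csum k (d+1) (W k p d) u := (mem_filter.1 hdD).2
    refine ⟨d+1, hdT, ?_⟩
    have hfreeze : ∀ v, k (d+1) v = k (d+1) u → ∀ t, d+1 ≤ t → t ≤ T →
        W k p t v = W k p (d+1) v := by
      intro v hv t ht hT'
      induction t with
      | zero => omega
      | succ t ih =>
        rcases Nat.lt_or_ge t d with hlt | hge
        · omega
        · rcases Nat.eq_or_lt_of_le hge with heq | hlt2
          · have : t + 1 = d + 1 := by omega
            rw [this]
          · have hvt : k (t+1) v = k (t+1) u := hcoar (by omega) hv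
            have hnD : t ∉ D := by
              intro hmem
              have := D.le_max' t hmem
              omega
            have hle : csum k (t+1) (W k p t) u ≤ p (t+1) := by
              by_contra hc
              exact hnD (mem_filter.2 ⟨mem_range.2 (by omega), not_le.1 hc⟩)
            have hone : (1:ℝ≥0∞) ≤ p (t+1) / csum k (t+1) (W k p t) u :=
              one_le_div_of_le (hpt _) (csum_ne_top hp0) hle
            rw [W]
            dsimp only
            rw [csum_congr hvt, min_eq_left hone, mul_one]
            exact ih (by omega) (by omega)
    have hstep : csum k (d+1) (W k p T) u = csum k (d+1) (W k p (d+1)) u :=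
      sum_congr rfl fun v hv => hfreeze v (mem_filter.1 hv).2 T (by omega) le_rfl
    rw [hstep, csum_succ_eq hp0 hpt, min_eq_right hdlt.le]

lemma csum_fiber_le (hk0 : Function.Injective (k 0)) (hp0 : p 0 ≠ ∞) (hpt : ∀ t, p t ≠ 0)
    {t t' : ℕ} (h : t ≤ t') (a : κ) :
    ∑ v ∈ univ.filter (fun v => k t v = a), W k p t' v ≤ p t := by
  rcases (univ.filter (fun v => k t v = a)).eq_empty_or_nonempty with he | ⟨u, hu⟩
  · rw [he, sum_empty]; exact zero_le
  · have hku : k t u = a := (mem_filter.1 hu).2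
    have : univ.filter (fun v => k t v = a) = univ.filter (fun v => k t v = k t u) := by
      apply Finset.filter_congr; intro w _; simp [hku]
    rw [this]
    exact csum_le hk0 hp0 hpt h u

end Abstract


abbrev E (n : ℕ) := EuclideanSpace ℝ (Fin n)

lemma floor_lt_floor_double {u v : ℝ} (h : ⌊u⌋ < ⌊v⌋) : ⌊2*u⌋ < ⌊2*v⌋ := by
  have h1 : (⌊u⌋ : ℝ) + 1 ≤ (⌊v⌋ : ℝ) := by exact_mod_cast Int.add_one_le_iff.2 h
  have h2 : (⌊v⌋ : ℝ) ≤ v := Int.floor_le v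
  have h3 : u < ⌊u⌋ + 1 := Int.lt_floor_add_one u
  have h4 : (2*⌊u⌋ + 2 : ℤ) ≤ ⌊2*v⌋ := by
    rw [Int.le_floor]
    push_cast
    linarith
  have h5 : ⌊2*u⌋ < (2*⌊u⌋ + 2 : ℤ) := by
    rw [Int.floor_lt]
    push_cast
    linarith
  omega

lemma floor_eq_of_double {u v : ℝ} (h : ⌊2*u⌋ = ⌊2*v⌋) : ⌊u⌋ = ⌊v⌋ := by
  rcases lt_trichotomy ⌊u⌋ ⌊v⌋ with hlt | heq | hgt
  · exact absurd h (floor_lt_floor_double hlt).ne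
  · exact heq
  · exact absurd h.symm (floor_lt_floor_double hgt).ne

noncomputable def idx (n j : ℕ) (x : E n) : Fin n → ℤ := fun i => ⌊(2:ℝ)^j * x i⌋

lemma idx_coarsen {n a b : ℕ} (hab : a ≤ b) {x y : E n} (h : idx n b x = idx n b y) :
    idx n a x = idx n a y := by
  obtain ⟨d, rfl⟩ := Nat.exists_eq_add_of_le hab
  induction d with
  | zero => exact h
  | succ d ih =>
    apply ih (Nat.le_add_right a d)
    funext i
    have hi := congrFun h i
    simp only [idx] at hi ⊢
    apply floor_eq_of_double
    have e1 : 2 * ((2:ℝ)^(a+d) * x i) = (2:ℝ)^(a+(d+1)) * x i := by ring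
    have e2 : 2 * ((2:ℝ)^(a+d) * y i) = (2:ℝ)^(a+(d+1)) * y i := by ring
    rw [e1, e2]
    exact hi

lemma coord_le_dist {n : ℕ} (x y : E n) (i : Fin n) : |x i - y i| ≤ dist x y := by
  rw [EuclideanSpace.dist_eq]
  rw [← Real.sqrt_sq_eq_abs]
  apply Real.sqrt_le_sqrt
  have : (x i - y i)^2 = dist (x i) (y i) ^ 2 := by
    rw [Real.dist_eq, sq_abs]
  rw [this]
  exact Finset.single_le_sum (f := fun i => dist (x i) (y i) ^ 2)
    (fun j _ => sq_nonneg _) (mem_univ i)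

lemma ediam_closedBall_eq {n : ℕ} (hn : 0 < n) (c : E n) {R : ℝ} (hR : 0 ≤ R) :
    EMetric.diam (Metric.closedBall c R) = ENNReal.ofReal (2*R) := by
  haveI : Nonempty (Fin n) := ⟨⟨0, hn⟩⟩
  apply le_antisymm
  · rw [← Metric.emetric_closedBall hR]
    calc EMetric.diam (EMetric.closedBall c (ENNReal.ofReal R)) ≤ 2 * ENNReal.ofReal R :=
          EMetric.diam_closedBall
      _ = ENNReal.ofReal (2*R) := by
          rw [ENNReal.ofReal_mul (by norm_num : (0:ℝ) ≤ 2), ENNReal.ofReal_ofNat]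
  · set e : E n := EuclideanSpace.single ⟨0, hn⟩ (1:ℝ) with he
    have hnorm : ‖e‖ = 1 := by simp [he, EuclideanSpace.norm_single]
    have h1 : c + R • e ∈ Metric.closedBall c R := by
      rw [Metric.mem_closedBall, dist_eq_norm]
      simp [norm_smul, hnorm, abs_of_nonneg hR]
    have h2 : c - R • e ∈ Metric.closedBall c R := by
      rw [Metric.mem_closedBall, dist_eq_norm]
      simp [norm_smul, hnorm, abs_of_nonneg hR]
    have h3 : edist (c + R • e) (c - R • e) = ENNReal.ofReal (2*R) := by
      rw [edist_dist, dist_eq_norm]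
      have : c + R • e - (c - R • e) = (2*R) • e := by
        module
      rw [this, norm_smul, hnorm]
      rw [mul_one, Real.norm_eq_abs, abs_of_nonneg (by linarith : (0:ℝ) ≤ 2*R)]
    rw [← h3]
    exact EMetric.edist_le_diam_of_mem h1 h2




section Steps
variable {n : ℕ} (hn : 0 < n) {θ s ε δ : ℝ}

lemma sqrt_one_le (hn : 0 < n) : 1 ≤ Real.sqrt n := by
  have h1 : (1:ℝ) ≤ (n:ℝ) := by exact_mod_cast hn
  nlinarith [Real.sq_sqrt (by positivity : (0:ℝ) ≤ (n:ℝ)), Real.sqrt_nonneg (n:ℝ)]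

lemma le_pow_of_logb_le {a : ℝ} {j : ℕ} (ha : 0 < a) (h : Real.logb 2 a ≤ (j:ℝ)) :
    a ≤ 2^j := by
  have := Real.rpow_le_rpow_of_exponent_le (by norm_num : (1:ℝ) ≤ 2) h
  rwa [Real.rpow_logb (by norm_num) (by norm_num) ha, Real.rpow_natCast] at this

lemma pow_le_of_le_logb {a : ℝ} {j : ℕ} (ha : 0 < a) (h : (j:ℝ) ≤ Real.logb 2 a + 1) :
    (2:ℝ)^j ≤ 2*a := by
  have := Real.rpow_le_rpow_of_exponent_le (by norm_num : (1:ℝ) ≤ 2) h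
  rwa [Real.rpow_add (by norm_num), Real.rpow_logb (by norm_num) (by norm_num) ha,
    Real.rpow_natCast, Real.rpow_one, mul_comm] at this

end Steps

noncomputable def Cc (n : ℕ) (s ε : ℝ) : ℝ :=
  (2*(⌈2*Real.sqrt n⌉₊:ℝ)+1)^n * ((2*Real.sqrt n)^s / ε) * 2^s

lemma Cc_pos {n : ℕ} {s ε : ℝ} (hn : 0 < n) (hε : 0 < ε) : 0 < Cc n s ε := by
  have h1 : (0:ℝ) < 2*Real.sqrt n := by
    have := sqrt_one_le hn; linarith
  have h2 : (0:ℝ) < (2*Real.sqrt n)^s := Real.rpow_pos_of_pos h1 s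
  have h3 : (0:ℝ) < (2:ℝ)^s := Real.rpow_pos_of_pos (by norm_num) s
  have h4 : (0:ℝ) < 2*(⌈2*Real.sqrt n⌉₊:ℝ)+1 := by positivity
  have h5 := pow_pos h4 n
  exact mul_pos (mul_pos h5 (div_pos h2 hε)) h3





lemma mul_inv_le_of_le_mul' {a b c : ℝ} (hb : 0 < b) (h : a ≤ c * b) : a * b⁻¹ ≤ c := by
  rw [← div_eq_mul_inv]
  exact (div_le_iff₀ hb).2 h

lemma le_mul_inv_of_mul_le' {a b c : ℝ} (hb : 0 < b) (h : c * b ≤ a) : c ≤ a * b⁻¹ := by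
  rw [← div_eq_mul_inv]
  exact (le_div_iff₀ hb).2 h

set_option maxHeartbeats 2000000 in
lemma construction {n : ℕ} (hn : 0 < n) {F : Set (E n)} (hFc : IsCompact F)
    (hFne : F.Nonempty) {θ s ε δ : ℝ} (hθ0 : 0 < θ) (hθ1 : θ ≤ 1) (hs : 0 < s)
    (hε : 0 < ε) (hδ0 : 0 < δ) (hδ1 : δ < 1)
    (hni : ¬ ICov F s (δ ^ (1/θ)) δ ε) :
    ∃ μ : Measure (E n), IsProbabilityMeasure μ ∧ μ Fᶜ = 0 ∧
      (∃ t : Finset (E n), μ ((↑t : Set (E n))ᶜ) = 0) ∧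
      ∀ (x : E n) (r : ℝ), δ ^ (1/θ) ≤ r → r ≤ δ →
        μ (Metric.closedBall x r) ≤ ENNReal.ofReal (Cc n s ε * r ^ s) := by
  classical
  set sq : ℝ := Real.sqrt n with hsqdef
  have hsq1 : 1 ≤ sq := sqrt_one_le hn
  have hsq0 : 0 < sq := lt_of_lt_of_le one_pos hsq1
  set dθ : ℝ := δ ^ (1/θ) with hdθdef
  have hdθ0 : 0 < dθ := Real.rpow_pos_of_pos hδ0 _
  have hdθδ : dθ ≤ δ := by
    have h1 : (1:ℝ) ≤ 1/θ := by
      rw [le_one_div (by norm_num) hθ0]; simpa using hθ1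
    have := Real.rpow_le_rpow_of_exponent_ge hδ0 hδ1.le h1
    rwa [Real.rpow_one] at this
  -- levels
  set m : ℕ := ⌈Real.logb 2 (sq/δ)⌉₊ with hmdef
  set Mc : ℕ := ⌈Real.logb 2 (sq/dθ)⌉₊ with hMcdef
  set M : ℕ := max m Mc with hMdef
  have hmM : m ≤ M := le_max_left _ _
  have hlogm0 : 0 ≤ Real.logb 2 (sq/δ) :=
    Real.logb_nonneg (by norm_num) ((one_le_div hδ0).2 (hδ1.le.trans hsq1))
  have hlogM0 : 0 ≤ Real.logb 2 (sq/dθ) :=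
    Real.logb_nonneg (by norm_num) ((one_le_div hdθ0).2 ((hdθδ.trans hδ1.le).trans hsq1))
  have hm1 : sq/δ ≤ 2^m := le_pow_of_logb_le (by positivity) (Nat.le_ceil _)
  have hm2 : (2:ℝ)^m ≤ 2*(sq/δ) :=
    pow_le_of_le_logb (by positivity) (by
      have := Nat.ceil_lt_add_one hlogm0
      exact_mod_cast this.le)
  have hM1 : sq/dθ ≤ 2^M := by
    apply le_pow_of_logb_le (by positivity)
    calc Real.logb 2 (sq/dθ) ≤ (Mc:ℝ) := Nat.le_ceil _
      _ ≤ (M:ℝ) := by exact_mod_cast le_max_right m Mc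
  have hM2 : (2:ℝ)^M ≤ 2*(sq/dθ) := by
    rcases max_cases m Mc with ⟨hMe, hcm⟩ | ⟨hMe, hcm⟩
    · rw [hMdef, hMe]
      calc (2:ℝ)^m ≤ 2*(sq/δ) := hm2
        _ ≤ 2*(sq/dθ) := by
          have : sq/δ ≤ sq/dθ := div_le_div_of_nonneg_left hsq0.le hdθ0 hdθδ
          linarith
    · rw [hMdef, hMe]
      exact pow_le_of_le_logb (by positivity) (by
        have := Nat.ceil_lt_add_one hlogM0
        exact_mod_cast this.le)
  have hm1' : sq ≤ δ * 2^m := by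
    rw [div_le_iff₀ hδ0] at hm1; linarith
  have hm2' : δ * 2^m ≤ 2*sq := by
    have h := mul_le_mul_of_nonneg_left hm2 hδ0.le
    have e : δ*(2*(sq/δ)) = 2*sq := by field_simp
    rw [e] at h; linarith
  have hM1' : sq ≤ dθ * 2^M := by
    rw [div_le_iff₀ hdθ0] at hM1; linarith
  have hM2' : dθ * 2^M ≤ 2*sq := by
    have h := mul_le_mul_of_nonneg_left hM2 hdθ0.le
    have e : dθ*(2*(sq/dθ)) = 2*sq := by field_simp
    rw [e] at h; linarith
  -- compactness: coordinates bounded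
  obtain ⟨R, hR⟩ := hFc.isBounded.subset_closedBall (0 : E n)
  have hIfin : (Set.image (idx n M) F).Finite := by
    apply Set.Finite.subset (Set.Finite.pi (fun i : Fin n =>
      Set.finite_Icc (⌊-((2:ℝ)^M * R)⌋) ⌊(2:ℝ)^M * R⌋))
    rintro v ⟨x, hxF, rfl⟩
    rw [Set.mem_pi]
    intro i _
    have hxi : |x i| ≤ R := by
      have h1 := coord_le_dist x 0 i
      have h2 : (0 : E n) i = 0 := rfl
      rw [h2, sub_zero] at h1
      exact h1.trans (by simpa using hR hxF)
    have hb : (0:ℝ) ≤ (2:ℝ)^M := by positivity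
    have habs := abs_le.1 hxi
    simp only [idx, Set.mem_Icc]
    constructor
    · apply Int.floor_mono; nlinarith [habs.1]
    · apply Int.floor_mono; nlinarith [habs.2]
  set I : Finset (Fin n → ℤ) := hIfin.toFinset with hIdef
  have hImem : ∀ v, v ∈ I ↔ ∃ x ∈ F, idx n M x = v := by
    intro v; rw [hIdef, Set.Finite.mem_toFinset]; simp [Set.mem_image]
  set rep : (Fin n → ℤ) → E n :=
    fun v => if h : ∃ x, x ∈ F ∧ idx n M x = v then h.choose else hFne.choose with hrepdef
  have hrep : ∀ v ∈ I, rep v ∈ F ∧ idx n M (rep v) = v := by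
    intro v hv
    obtain ⟨x, hx1, hx2⟩ := (hImem v).1 hv
    have hex : ∃ x, x ∈ F ∧ idx n M x = v := ⟨x, hx1, hx2⟩
    rw [hrepdef]
    simp only [dif_pos hex]
    exact hex.choose_spec
  -- abstract data
  set k : ℕ → {v // v ∈ I} → (Fin n → ℤ) := fun t u => idx n (M - t) (rep ↑u) with hkdef
  set p : ℕ → ℝ≥0∞ := fun t => ENNReal.ofReal (((2:ℝ)^(M-t))⁻¹ ^ s) with hpdef
  have hk0 : Function.Injective (k 0) := by
    intro u v h
    rw [hkdef] at h
    simp only [Nat.sub_zero] at h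
    rw [(hrep _ u.2).2, (hrep _ v.2).2] at h
    exact Subtype.ext h
  have hcoar : ∀ {a b : ℕ} {u v : {v // v ∈ I}}, a ≤ b → k a u = k a v → k b u = k b v := by
    intro a b u v hab h
    exact idx_coarsen (Nat.sub_le_sub_left hab M) h
  have hp0 : p 0 ≠ ∞ := ENNReal.ofReal_ne_top
  have hppos : ∀ t : ℕ, (0:ℝ) < (((2:ℝ)^(M-t))⁻¹ ^ s) := fun t =>
    Real.rpow_pos_of_pos (by positivity) s
  have hpt : ∀ t, p t ≠ 0 := fun t => by
    rw [hpdef]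
    exact (ENNReal.ofReal_pos.2 (hppos t)).ne'
  set T : ℕ := M - m with hTdef
  have hTM : T ≤ M := Nat.sub_le _ _
  set Total : ℝ≥0∞ := ∑ u : {v // v ∈ I}, W k p T u with hTotdef
  have hTotTop : Total ≠ ⊤ := by
    rw [hTotdef]
    exact (ENNReal.sum_lt_top.2 fun u _ => lt_of_le_of_lt (W_le_p0 T u) hp0.lt_top).ne
  -- saturation choices
  have hsat := fun u => saturation hk0 hcoar hp0 hpt T u
  set rstar : {v // v ∈ I} → ℕ := fun u => (hsat u).choose with hrstardef
  have hrs1 : ∀ u, rstar u ≤ T := fun u => (hsat u).choose_spec.1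
  have hrs2 : ∀ u, csum k (rstar u) (W k p T) u = p (rstar u) := fun u => (hsat u).choose_spec.2
  set Rset : {v // v ∈ I} → Finset ℕ := fun u =>
    (Finset.range (T+1)).filter (fun r => ∃ v, rstar v = r ∧ k r v = k r u) with hRsetdef
  have hRne : ∀ u, (Rset u).Nonempty := fun u =>
    ⟨rstar u, mem_filter.2 ⟨mem_range.2 (Nat.lt_succ_of_le (hrs1 u)), ⟨u, rfl, rfl⟩⟩⟩
  set ρ : {v // v ∈ I} → ℕ := fun u => (Rset u).max' (hRne u) with hρdef
  have hρT : ∀ u, ρ u ≤ T := fun u => by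
    have h : ρ u ∈ (Finset.range (T+1)).filter
        (fun r => ∃ v, rstar v = r ∧ k r v = k r (u:{v // v ∈ I})) := (Rset u).max'_mem (hRne u)
    exact Nat.lt_succ_iff.1 (mem_range.1 (mem_filter.1 h).1)
  have hρwit : ∀ u, ∃ v, rstar v = ρ u ∧ k (ρ u) v = k (ρ u) u := fun u => by
    have h : ρ u ∈ (Finset.range (T+1)).filter
        (fun r => ∃ v, rstar v = r ∧ k r v = k r (u:{v // v ∈ I})) := (Rset u).max'_mem (hRne u)
    exact (mem_filter.1 h).2
  have hρmax : ∀ u r, r ≤ T → (∃ v, rstar v = r ∧ k r v = k r u) → r ≤ ρ u := by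
    intro u r hrT hex
    apply (Rset u).le_max'
    exact mem_filter.2 ⟨mem_range.2 (Nat.lt_succ_of_le hrT), hex⟩
  set g : {v // v ∈ I} → ℕ × (Fin n → ℤ) := fun u => (ρ u, k (ρ u) u) with hgdef
  set G : Finset (ℕ × (Fin n → ℤ)) := Finset.image g Finset.univ with hGdef
  have hGT : ∀ γ ∈ G, γ.1 ≤ T := by
    intro γ hγ
    rw [hGdef] at hγ
    obtain ⟨u, _, rfl⟩ := Finset.mem_image.1 hγ
    exact hρT u
  have hGmass : ∀ γ ∈ G, (∑ u ∈ univ.filter (fun u => k γ.1 u = γ.2), W k p T u) = p γ.1 := by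
    intro γ hγ
    rw [hGdef] at hγ
    obtain ⟨u₀, _, rfl⟩ := Finset.mem_image.1 hγ
    obtain ⟨v, hv1, hv2⟩ := hρwit u₀
    simp only [hgdef]
    have hfe : univ.filter (fun u => k (ρ u₀) u = k (ρ u₀) u₀)
        = univ.filter (fun w => k (rstar v) w = k (rstar v) v) := by
      apply Finset.filter_congr; intro w _
      simp only [hv1, hv2]
    rw [hfe, ← hv1]
    exact hrs2 v
  have hkey : ∀ u u' (w : {v // v ∈ I}), ρ u ≤ ρ u' →
      k (ρ u) w = k (ρ u) u → k (ρ u') w = k (ρ u') u' → g u = g u' := by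
    intro u u' w hle h1 h2
    obtain ⟨v', hv'1, hv'2⟩ := hρwit u'
    have hku : k (ρ u') w = k (ρ u') u := hcoar hle h1
    have h3 : k (ρ u') v' = k (ρ u') u := hv'2.trans (h2.symm.trans hku)
    have hle2 : ρ u' ≤ ρ u := hρmax u (ρ u') (hρT u') ⟨v', hv'1, h3⟩
    have heq : ρ u = ρ u' := le_antisymm hle hle2
    have h4 : k (ρ u) u = k (ρ u') u' := by
      rw [← h1, heq, h2]
    simp only [hgdef]
    exact Prod.ext heq h4
  have hGdisj : ∀ γ₁ ∈ G, ∀ γ₂ ∈ G, γ₁ ≠ γ₂ →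
      Disjoint (univ.filter (fun u => k γ₁.1 u = γ₁.2))
        (univ.filter (fun u => k γ₂.1 u = γ₂.2)) := by
    intro γ₁ hγ₁ γ₂ hγ₂ hne
    rw [Finset.disjoint_left]
    intro w hw1 hw2
    rw [hGdef] at hγ₁ hγ₂
    obtain ⟨u₁, _, rfl⟩ := Finset.mem_image.1 hγ₁
    obtain ⟨u₂, _, rfl⟩ := Finset.mem_image.1 hγ₂
    simp only [hgdef, mem_filter] at hw1 hw2
    rcases le_total (ρ u₁) (ρ u₂) with h | h
    · exact hne (hkey u₁ u₂ w h hw1.2 hw2.2)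
    · exact hne (hkey u₂ u₁ w h hw2.2 hw1.2).symm
  have hGsum : ∑ γ ∈ G, p γ.1 ≤ Total := by
    have h1 : ∑ γ ∈ G, p γ.1
        = ∑ γ ∈ G, ∑ u ∈ univ.filter (fun u => k γ.1 u = γ.2), W k p T u :=
      sum_congr rfl fun γ hγ => (hGmass γ hγ).symm
    have h2 : ∑ γ ∈ G, ∑ u ∈ univ.filter (fun u => k γ.1 u = γ.2), W k p T u
        = ∑ u ∈ G.biUnion (fun γ => univ.filter (fun u => k γ.1 u = γ.2)), W k p T u :=
      (Finset.sum_biUnion (fun γ₁ h₁ γ₂ h₂ hne =>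
        hGdisj γ₁ (Finset.mem_coe.1 h₁) γ₂ (Finset.mem_coe.1 h₂) hne)).symm
    rw [h1, h2, hTotdef]
    exact sum_le_sum_of_subset (subset_univ _)
  -- the cover by balls around dyadic cubes
  set ctr : ℕ × (Fin n → ℤ) → E n := fun γ =>
    (WithLp.equiv 2 (Fin n → ℝ)).symm (fun i => ((γ.2 i : ℝ) + 1/2) * ((2:ℝ)^(M-γ.1))⁻¹)
    with hctrdef
  have hctrapp : ∀ γ i, ctr γ i = ((γ.2 i : ℝ) + 1/2) * ((2:ℝ)^(M-γ.1))⁻¹ := fun γ i => rfl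
  set dd : ℕ × (Fin n → ℤ) → ℝ := fun γ => max (sq * ((2:ℝ)^(M-γ.1))⁻¹) dθ with hdddef
  have hdd0 : ∀ γ, 0 < dd γ := fun γ => lt_of_lt_of_le hdθ0 (le_max_right _ _)
  have hddlo : ∀ γ, dθ ≤ dd γ := fun γ => le_max_right _ _
  have hinvmono : ∀ {a b : ℕ}, a ≤ b → ((2:ℝ)^b)⁻¹ ≤ ((2:ℝ)^a)⁻¹ := by
    intro a b hab
    apply inv_anti₀ (by positivity)
    exact pow_le_pow_right₀ (by norm_num) hab
  have hddhi : ∀ γ ∈ G, dd γ ≤ δ := by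
    intro γ hγ
    apply max_le _ hdθδ
    have hj : m ≤ M - γ.1 := by have := hGT γ hγ; omega
    calc sq * ((2:ℝ)^(M-γ.1))⁻¹ ≤ sq * ((2:ℝ)^m)⁻¹ := by
          have := hinvmono hj
          nlinarith
      _ ≤ δ := mul_inv_le_of_le_mul' (by positivity) hm1'
  have hdd2 : ∀ γ, dd γ ≤ 2*sq*((2:ℝ)^(M-γ.1))⁻¹ := by
    intro γ
    apply max_le
    · have h0 : (0:ℝ) < ((2:ℝ)^(M-γ.1))⁻¹ := by positivity
      nlinarith
    · have h1 : dθ ≤ 2*sq*((2:ℝ)^M)⁻¹ := le_mul_inv_of_mul_le' (by positivity) hM2'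
      have h2 : ((2:ℝ)^M)⁻¹ ≤ ((2:ℝ)^(M-γ.1))⁻¹ := hinvmono (Nat.sub_le _ _)
      nlinarith
  have hcover : F ⊆ ⋃ γ : {γ // γ ∈ G}, Metric.closedBall (ctr ↑γ) (dd ↑γ / 2) := by
    intro x hx
    have hxI : idx n M x ∈ I := (hImem _).2 ⟨x, hx, rfl⟩
    set u : {v // v ∈ I} := ⟨idx n M x, hxI⟩ with hudef
    have hux : ∀ j, j ≤ M → idx n j (rep ↑u) = idx n j x := by
      intro j hj
      apply idx_coarsen hj
      rw [(hrep _ u.2).2]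
    have hGu : g u ∈ G := by rw [hGdef]; exact Finset.mem_image.2 ⟨u, mem_univ u, rfl⟩
    refine Set.mem_iUnion.2 ⟨⟨g u, hGu⟩, ?_⟩
    rw [mem_closedBall]
    have hkx : ∀ i, (g u).2 i = ⌊(2:ℝ)^(M - ρ u) * x i⌋ := by
      intro i
      have h1 : (g u).2 = k (ρ u) u := rfl
      rw [h1, hkdef]
      simp only
      rw [hux (M - ρ u) (Nat.sub_le _ _)]
      rfl
    have hq0 : (0:ℝ) ≤ ((2:ℝ)^(M - ρ u))⁻¹ * (1/2) := by positivity
    have hco : ∀ i, |x i - ctr (g u) i| ≤ ((2:ℝ)^(M - ρ u))⁻¹ * (1/2) := by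
      intro i
      rw [hctrapp]
      have hg1 : (g u).1 = ρ u := rfl
      rw [hg1, hkx i]
      set a : ℤ := ⌊(2:ℝ)^(M - ρ u) * x i⌋ with hadef
      have hpow : (0:ℝ) < (2:ℝ)^(M - ρ u) := by positivity
      have hfl : (a:ℝ) ≤ (2:ℝ)^(M - ρ u) * x i := Int.floor_le _
      have hfu : (2:ℝ)^(M - ρ u) * x i < (a:ℝ) + 1 := Int.lt_floor_add_one _
      have heq : x i - ((a:ℝ) + 1/2) * ((2:ℝ)^(M - ρ u))⁻¹
          = ((2:ℝ)^(M - ρ u) * x i - ((a:ℝ) + 1/2)) * ((2:ℝ)^(M - ρ u))⁻¹ := by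
        field_simp
      rw [heq, abs_mul, abs_of_pos (by positivity : (0:ℝ) < ((2:ℝ)^(M - ρ u))⁻¹)]
      have habs : |(2:ℝ)^(M - ρ u) * x i - ((a:ℝ) + 1/2)| ≤ 1/2 := by
        rw [abs_le]; constructor <;> [linarith; linarith]
      have hpinv : (0:ℝ) < ((2:ℝ)^(M - ρ u))⁻¹ := by positivity
      calc |(2:ℝ)^(M - ρ u) * x i - ((a:ℝ) + 1/2)| * ((2:ℝ)^(M - ρ u))⁻¹
          ≤ (1/2) * ((2:ℝ)^(M - ρ u))⁻¹ := by
            nlinarith [abs_nonneg ((2:ℝ)^(M - ρ u) * x i - ((a:ℝ) + 1/2))]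
        _ = ((2:ℝ)^(M - ρ u))⁻¹ * (1/2) := by ring
    have hdist : dist x (ctr (g u)) ≤ sq * (((2:ℝ)^(M - ρ u))⁻¹ * (1/2)) := by
      rw [EuclideanSpace.dist_eq]
      have hsum : ∑ i, dist (x i) (ctr (g u) i) ^ 2
          ≤ (n:ℝ) * (((2:ℝ)^(M - ρ u))⁻¹ * (1/2))^2 := by
        calc ∑ i, dist (x i) (ctr (g u) i) ^ 2
            ≤ ∑ _i : Fin n, (((2:ℝ)^(M - ρ u))⁻¹ * (1/2))^2 := by
              apply sum_le_sum
              intro i _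
              have := hco i
              rw [Real.dist_eq]
              nlinarith [abs_nonneg (x i - ctr (g u) i)]
          _ = (n:ℝ) * (((2:ℝ)^(M - ρ u))⁻¹ * (1/2))^2 := by
              rw [sum_const, card_univ, Fintype.card_fin, nsmul_eq_mul]
      calc Real.sqrt (∑ i, dist (x i) (ctr (g u) i) ^ 2)
          ≤ Real.sqrt ((n:ℝ) * (((2:ℝ)^(M - ρ u))⁻¹ * (1/2))^2) := Real.sqrt_le_sqrt hsum
        _ = sq * (((2:ℝ)^(M - ρ u))⁻¹ * (1/2)) := by
            rw [Real.sqrt_mul (by positivity), Real.sqrt_sq hq0, hsqdef]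
    refine hdist.trans ?_
    have hg1 : (g u).1 = ρ u := rfl
    have : sq * ((2:ℝ)^(M - ρ u))⁻¹ ≤ dd (g u) := by
      rw [hdddef]
      simp only [hg1]
      exact le_max_left _ _
    linarith
  have hdiam : ∀ γ, EMetric.diam (Metric.closedBall (ctr γ) (dd γ / 2))
      = ENNReal.ofReal (dd γ) := by
    intro γ
    rw [ediam_closedBall_eq hn _ (by linarith [hdd0 γ] : (0:ℝ) ≤ dd γ / 2)]
    congr 1; ring
  have hsum_lt : ENNReal.ofReal ε < ∑ γ ∈ G, ENNReal.ofReal (dd γ) ^ s := by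
    rw [← not_le]
    intro hle
    apply hni
    refine ⟨{γ // γ ∈ G}, inferInstance, fun γ => Metric.closedBall (ctr ↑γ) (dd ↑γ / 2),
      hcover, ?_, ?_⟩
    · intro γ
      rw [hdiam]
      exact ⟨ENNReal.ofReal_le_ofReal (hddlo _), ENNReal.ofReal_le_ofReal (hddhi _ γ.2)⟩
    · calc ∑' γ : {γ // γ ∈ G}, EMetric.diam (Metric.closedBall (ctr ↑γ) (dd ↑γ / 2)) ^ s
          = ∑ γ ∈ G, EMetric.diam (Metric.closedBall (ctr γ) (dd γ / 2)) ^ s := by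
            rw [tsum_fintype]
            exact Finset.sum_coe_sort G
              (fun γ => EMetric.diam (Metric.closedBall (ctr γ) (dd γ / 2)) ^ s)
        _ = ∑ γ ∈ G, ENNReal.ofReal (dd γ) ^ s := by
            exact sum_congr rfl fun γ _ => by rw [hdiam]
        _ ≤ ENNReal.ofReal ε := hle
  have hTlb : ENNReal.ofReal (ε / (2*sq)^s) ≤ Total := by
    have h1 : ∀ γ ∈ G, ENNReal.ofReal (dd γ) ^ s ≤ ENNReal.ofReal ((2*sq)^s) * p γ.1 := by
      intro γ hγ
      rw [ENNReal.ofReal_rpow_of_pos (hdd0 γ), hpdef]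
      simp only
      rw [← ENNReal.ofReal_mul (by positivity)]
      apply ENNReal.ofReal_le_ofReal
      calc dd γ ^ s ≤ (2*sq*((2:ℝ)^(M-γ.1))⁻¹) ^ s :=
            Real.rpow_le_rpow (hdd0 γ).le (hdd2 γ) hs.le
        _ = (2*sq)^s * (((2:ℝ)^(M-γ.1))⁻¹)^s := Real.mul_rpow (by positivity) (by positivity)
    have h3 : ENNReal.ofReal ε ≤ Total * ENNReal.ofReal ((2*sq)^s) := by
      calc ENNReal.ofReal ε ≤ ∑ γ ∈ G, ENNReal.ofReal (dd γ) ^ s := hsum_lt.le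
        _ ≤ ∑ γ ∈ G, ENNReal.ofReal ((2*sq)^s) * p γ.1 := sum_le_sum h1
        _ = ENNReal.ofReal ((2*sq)^s) * ∑ γ ∈ G, p γ.1 := by rw [mul_sum]
        _ ≤ ENNReal.ofReal ((2*sq)^s) * Total := mul_le_mul_right hGsum _
        _ = Total * ENNReal.ofReal ((2*sq)^s) := mul_comm _ _
    rw [ENNReal.ofReal_div_of_pos (by positivity : (0:ℝ) < (2*sq)^s)]
    exact ENNReal.div_le_of_le_mul h3
  have hTot0 : Total ≠ 0 :=
    (lt_of_lt_of_le (ENNReal.ofReal_pos.2 (by positivity)) hTlb).ne'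
  -- the measure
  set μ₀ : Measure (E n) := ∑ u : {v // v ∈ I}, W k p T u • Measure.dirac (rep ↑u) with hμ₀def
  set μ : Measure (E n) := Total⁻¹ • μ₀ with hμdef
  have hμ₀app : ∀ A : Set (E n), MeasurableSet A →
      μ₀ A = ∑ u : {v // v ∈ I}, W k p T u * A.indicator 1 (rep ↑u) := by
    intro A hA
    rw [hμ₀def, Measure.finset_sum_apply]
    exact sum_congr rfl fun u _ => by
      rw [Measure.smul_apply, smul_eq_mul, Measure.dirac_apply' _ hA]
  have hμ₀univ : μ₀ Set.univ = Total := by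
    rw [hμ₀app Set.univ MeasurableSet.univ, hTotdef]
    exact sum_congr rfl fun u _ => by simp
  have hFclosed : IsClosed F := hFc.isClosed
  have hprob : IsProbabilityMeasure μ := by
    constructor
    rw [hμdef, Measure.smul_apply, hμ₀univ, smul_eq_mul,
      ENNReal.inv_mul_cancel hTot0 hTotTop]
  refine ⟨μ, hprob, ?_, ?_, ?_⟩
  · rw [hμdef, Measure.smul_apply, hμ₀app _ hFclosed.measurableSet.compl]
    have h0 : (∑ u : {v // v ∈ I}, W k p T u * (Fᶜ).indicator 1 (rep ↑u)) = 0 := by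
      apply Finset.sum_eq_zero
      intro u _
      have hmem : rep ↑u ∉ Fᶜ := by simp [(hrep _ u.2).1]
      rw [Set.indicator_of_notMem hmem, mul_zero]
    rw [h0, smul_zero]
  · refine ⟨Finset.image (fun u : {v // v ∈ I} => rep ↑u) Finset.univ, ?_⟩
    set t : Finset (E n) := Finset.image (fun u : {v // v ∈ I} => rep ↑u) Finset.univ with htdef
    have hmeas : MeasurableSet ((↑t : Set (E n))ᶜ) := t.finite_toSet.isClosed.measurableSet.compl
    rw [hμdef, Measure.smul_apply, hμ₀app _ hmeas]
    have h0 : (∑ u : {v // v ∈ I}, W k p T u * ((↑t : Set (E n))ᶜ).indicator 1 (rep ↑u)) = 0 := by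
      apply Finset.sum_eq_zero
      intro u _
      have hmem : rep ↑u ∉ ((↑t : Set (E n))ᶜ) := by
        simp only [Set.mem_compl_iff, not_not]
        exact Finset.mem_coe.2 (Finset.mem_image.2 ⟨u, Finset.mem_univ u, rfl⟩)
      rw [Set.indicator_of_notMem hmem, mul_zero]
    rw [h0, smul_zero]
  · intro x r hr1 hr2
    have hr0 : 0 < r := lt_of_lt_of_le hdθ0 hr1
    set j₀ : ℕ := ⌊Real.logb 2 r⁻¹⌋₊ with hj₀def
    set j : ℕ := min M (max m j₀) with hjdef
    have hjm : m ≤ j := le_min hmM (le_max_left _ _)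
    have hjM : j ≤ M := min_le_left _ _
    have hr1' : 1 ≤ r⁻¹ := by
      rw [le_inv_comm₀ (by norm_num) hr0]
      simp only [inv_one]
      linarith
    have hlgr : 0 ≤ Real.logb 2 r⁻¹ := Real.logb_nonneg (by norm_num) hr1'
    have hj₀1 : (2:ℝ)^j₀ * r ≤ 1 := by
      have h1 : (2:ℝ)^j₀ ≤ r⁻¹ := by
        have h2 : ((j₀:ℝ)) ≤ Real.logb 2 r⁻¹ := Nat.floor_le hlgr
        have := Real.rpow_le_rpow_of_exponent_le (by norm_num : (1:ℝ) ≤ 2) h2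
        rwa [Real.rpow_logb (by norm_num) (by norm_num) (by positivity),
          Real.rpow_natCast] at this
      have h3 := mul_le_mul_of_nonneg_right h1 hr0.le
      rwa [inv_mul_cancel₀ hr0.ne'] at h3
    have hj₀2 : ((2:ℝ)^j₀)⁻¹ ≤ 2*r := by
      have h1 : r⁻¹ ≤ (2:ℝ)^(j₀+1) := by
        have h2 : Real.logb 2 r⁻¹ ≤ ((j₀+1 : ℕ):ℝ) := by
          push_cast
          exact (Nat.lt_floor_add_one _).le
        exact le_pow_of_logb_le (by positivity) h2
      have h3 : ((2:ℝ)^(j₀+1))⁻¹ ≤ r := by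
        rw [inv_le_comm₀ (by positivity) hr0]
        rwa [← one_div, div_le_iff₀ hr0, mul_comm, ← div_le_iff₀ (by positivity : (0:ℝ) < (2:ℝ)^(j₀+1)), div_eq_mul_inv, one_mul, inv_le_comm₀ (by positivity) hr0] at h1
      have h4 : ((2:ℝ)^j₀)⁻¹ = 2 * ((2:ℝ)^(j₀+1))⁻¹ := by
        rw [pow_succ]
        field_simp
      linarith
    have hi : ((2:ℝ)^j)⁻¹ ≤ 2*r := by
      rcases le_total j₀ j with hc | hc
      · exact (hinvmono hc).trans hj₀2
      · rcases lt_or_eq_of_le hc with hlt | heqj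
        · have hje : j = M := by
            rcases le_total M (max m j₀) with hA | hA
            · rw [hjdef]; exact min_eq_left hA
            · have h2 : j = max m j₀ := by rw [hjdef]; exact min_eq_right hA
              have h3 : j₀ ≤ max m j₀ := le_max_right _ _
              rw [← h2] at h3
              omega
          have h6 : ((2:ℝ)^M)⁻¹ ≤ dθ := by
            have h7 := mul_inv_le_of_le_mul' (by positivity : (0:ℝ) < (2:ℝ)^M) hM1'
            nlinarith [inv_pos.2 (by positivity : (0:ℝ) < (2:ℝ)^M)]
          rw [hje]
          linarith
        · rw [heqj]
          exact hj₀2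
    have hii : (2:ℝ)^j * r ≤ 2*sq := by
      have hcase : j ≤ j₀ ∨ j ≤ m := by
        have h1 : j ≤ max m j₀ := min_le_right _ _
        rcases max_cases m j₀ with ⟨hmx, _⟩ | ⟨hmx, _⟩
        · right; rw [hmx] at h1; exact h1
        · left; rw [hmx] at h1; exact h1
      rcases hcase with hc | hc
      · have h7 : (2:ℝ)^j ≤ (2:ℝ)^j₀ := pow_le_pow_right₀ (by norm_num) hc
        nlinarith [hj₀1]
      · have h9 : j ≤ m := hc
        have h10 : (2:ℝ)^j ≤ (2:ℝ)^m := pow_le_pow_right₀ (by norm_num) h9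
        have h11 : (2:ℝ)^m * r ≤ (2:ℝ)^m * δ :=
          mul_le_mul_of_nonneg_left hr2 (by positivity)
        have h12 : (2:ℝ)^j * r ≤ (2:ℝ)^m * r :=
          mul_le_mul_of_nonneg_right h10 hr0.le
        calc (2:ℝ)^j * r ≤ (2:ℝ)^m * δ := by linarith
          _ ≤ 2*sq := by rw [mul_comm]; exact hm2'
    set L : ℕ := ⌈2*sq⌉₊ with hLdef
    have hL : 2*sq ≤ (L:ℝ) := Nat.le_ceil _
    set A : Finset (Fin n → ℤ) :=
      Fintype.piFinset (fun i => Finset.Icc (idx n j x i - L) (idx n j x i + L)) with hAdef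
    have hAcard : A.card = (2*L+1)^n := by
      rw [hAdef, Fintype.card_piFinset]
      have hic : ∀ i : Fin n, (Finset.Icc (idx n j x i - L) (idx n j x i + L)).card = 2*L+1 := by
        intro i
        rw [Int.card_Icc]
        have he : (idx n j x i + L + 1 - (idx n j x i - L)) = ((2*L+1 : ℕ) : ℤ) := by
          push_cast; ring
        rw [he, Int.toNat_natCast]
      rw [Finset.prod_congr rfl (fun i _ => hic i), prod_const, card_univ, Fintype.card_fin]
    have hmaps : ∀ u : {v // v ∈ I}, rep ↑u ∈ Metric.closedBall x r → k (M - j) u ∈ A := by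
      intro u hu
      have hkj : k (M - j) u = idx n j (rep ↑u) := by
        rw [hkdef]
        simp only
        rw [Nat.sub_sub_self hjM]
      rw [hkj, hAdef, Fintype.mem_piFinset]
      intro i
      rw [Finset.mem_Icc]
      have hdi : |rep ↑u i - x i| ≤ r := (coord_le_dist _ _ i).trans (mem_closedBall.1 hu)
      have habs := abs_le.1 hdi
      have hp2 : (0:ℝ) < (2:ℝ)^j := by positivity
      have hup : (2:ℝ)^j * rep ↑u i ≤ (2:ℝ)^j * x i + ((L:ℤ):ℝ) := by
        have h1 := mul_le_mul_of_nonneg_left (show rep ↑u i ≤ x i + r by linarith) hp2.le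
        have e1 : (2:ℝ)^j * (x i + r) = 2^j * x i + 2^j * r := by ring
        push_cast
        nlinarith [hii, hL]
      have hlo : (2:ℝ)^j * x i - ((L:ℤ):ℝ) ≤ (2:ℝ)^j * rep ↑u i := by
        have h1 := mul_le_mul_of_nonneg_left (show x i - r ≤ rep ↑u i by linarith) hp2.le
        have e1 : (2:ℝ)^j * (x i - r) = 2^j * x i - 2^j * r := by ring
        push_cast
        nlinarith [hii, hL]
      simp only [idx]
      constructor
      · have h2 := Int.floor_mono hlo
        rwa [show ((2:ℝ)^j * x i - ((L:ℤ):ℝ)) = ((2:ℝ)^j * x i) + ((-(L:ℤ) : ℤ):ℝ) by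
          push_cast; ring, Int.floor_add_intCast] at h2
      · have h2 := Int.floor_mono hup
        rwa [Int.floor_add_intCast] at h2
    have hball : μ₀ (Metric.closedBall x r) ≤ (A.card : ℝ≥0∞) * p (M - j) := by
      rw [hμ₀app _ measurableSet_closedBall]
      have e : ∀ u : {v // v ∈ I}, W k p T u * (Metric.closedBall x r).indicator 1 (rep ↑u)
          = if rep ↑u ∈ Metric.closedBall x r then W k p T u else 0 := by
        intro u
        by_cases h : rep ↑u ∈ Metric.closedBall x r <;> simp [Set.indicator_apply, h]
      rw [Finset.sum_congr rfl (fun u _ => e u), ← Finset.sum_filter]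
      calc ∑ u ∈ univ.filter (fun u : {v // v ∈ I} => rep ↑u ∈ Metric.closedBall x r), W k p T u
          ≤ ∑ u ∈ univ.filter (fun u => k (M-j) u ∈ A), W k p T u := by
            apply sum_le_sum_of_subset
            intro u hu
            rw [mem_filter] at hu ⊢
            exact ⟨hu.1, hmaps u hu.2⟩
        _ = ∑ a ∈ A, ∑ u ∈ (univ.filter (fun u => k (M-j) u ∈ A)).filter
              (fun u => k (M-j) u = a), W k p T u :=
            (Finset.sum_fiberwise_of_maps_to (fun u hu => (mem_filter.1 hu).2) _).symm
        _ ≤ ∑ _a ∈ A, p (M-j) := by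
            apply sum_le_sum
            intro a _
            calc ∑ u ∈ (univ.filter (fun u => k (M-j) u ∈ A)).filter
                  (fun u => k (M-j) u = a), W k p T u
                ≤ ∑ u ∈ univ.filter (fun u => k (M-j) u = a), W k p T u := by
                  apply sum_le_sum_of_subset
                  intro u hu
                  rw [mem_filter] at hu ⊢
                  exact ⟨mem_univ u, hu.2⟩
              _ ≤ p (M-j) := csum_fiber_le hk0 hp0 hpt (by omega : M - j ≤ T) a
        _ = (A.card : ℝ≥0∞) * p (M-j) := by rw [sum_const, nsmul_eq_mul]
    have hinvT : Total⁻¹ ≤ ENNReal.ofReal ((2*sq)^s/ε) := by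
      have h1 := ENNReal.inv_le_inv' hTlb
      have h2 : (ENNReal.ofReal (ε / (2*sq)^s))⁻¹ = ENNReal.ofReal ((2*sq)^s/ε) := by
        rw [← ENNReal.ofReal_inv_of_pos (by positivity), inv_div]
      rwa [h2] at h1
    have hfin : μ (Metric.closedBall x r)
        ≤ ENNReal.ofReal ((2*sq)^s/ε) * ((A.card : ℝ≥0∞) * p (M-j)) := by
      rw [hμdef, Measure.smul_apply, smul_eq_mul]
      exact mul_le_mul hinvT hball zero_le zero_le
    refine hfin.trans ?_
    rw [hAcard, hpdef]
    simp only
    have hjj : M - (M - j) = j := Nat.sub_sub_self hjM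
    rw [hjj]
    have hcast : ((((2*L+1)^n : ℕ)) : ℝ≥0∞) = ENNReal.ofReal ((((2*L+1)^n : ℕ)) : ℝ) :=
      (ENNReal.ofReal_natCast _).symm
    rw [hcast, ← ENNReal.ofReal_mul (by positivity), ← ENNReal.ofReal_mul (by positivity)]
    apply ENNReal.ofReal_le_ofReal
    have hrs : (((2:ℝ)^j)⁻¹)^s ≤ (2*r)^s :=
      Real.rpow_le_rpow (by positivity) hi hs.le
    have h2rs : ((2:ℝ)*r)^s = 2^s * r^s := Real.mul_rpow (by norm_num) hr0.le
    have hcard0 : (0:ℝ) ≤ ((((2*L+1)^n : ℕ)) : ℝ) := by positivity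
    have hfrac0 : (0:ℝ) ≤ (2*sq)^s/ε := by positivity
    calc (2*sq)^s/ε * (((((2*L+1)^n : ℕ)) : ℝ) * (((2:ℝ)^j)⁻¹)^s)
        ≤ (2*sq)^s/ε * (((((2*L+1)^n : ℕ)) : ℝ) * (2^s * r^s)) := by
          rw [← h2rs]
          exact mul_le_mul_of_nonneg_left
            (mul_le_mul_of_nonneg_left hrs hcard0) hfrac0
      _ = Cc n s ε * r^s := by
          rw [hLdef, hsqdef]
          unfold Cc
          push_cast
          ring

end SF

set_option maxHeartbeats 1000000 in
theorem stmt10 (n : ℕ) (F : Set (EuclideanSpace ℝ (Fin n))) (hF : IsCompact F)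
    (θ : ℝ) (hθ : θ ∈ Set.Ioc (0:ℝ) 1) (s : ℝ) (hs : 0 < s) (hsd : s < lowerIDim F θ) :
    ∃ c > (0:ℝ), ∀ δ : ℝ, 0 < δ → δ < 1 →
      ∃ μ : MeasureTheory.Measure (EuclideanSpace ℝ (Fin n)),
        MeasureTheory.IsProbabilityMeasure μ ∧ μ Fᶜ = 0 ∧
        (∃ t : Finset (EuclideanSpace ℝ (Fin n)), μ ((↑t : Set (EuclideanSpace ℝ (Fin n)))ᶜ) = 0) ∧
        ∀ x : EuclideanSpace ℝ (Fin n), ∀ r : ℝ, δ ^ (1 / θ) ≤ r → r ≤ δ →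
          μ (Metric.closedBall x r) ≤ ENNReal.ofReal (c * r ^ s) := by
  classical
  open SF MeasureTheory in
  obtain ⟨hθ0, hθ1⟩ := hθ
  have hθne : θ ≠ 0 := hθ0.ne'
  unfold lowerIDim at hsd
  rw [if_neg hθne] at hsd
  set S := {s' : ℝ | 0 ≤ s' ∧ ∀ ε > 0, ∀ δ₀ > 0, ∃ δ : ℝ, 0 < δ ∧ δ ≤ δ₀ ∧
    ICov F s' (δ ^ (1 / θ)) δ ε} with hSdef
  have hBdd : BddBelow S := ⟨0, fun x hx => hx.1⟩
  have hsnot : s ∉ S := fun hmem => absurd (csInf_le hBdd hmem) (not_le.2 hsd)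
  rcases Set.eq_empty_or_nonempty F with hFe | hFne
  · exfalso
    apply hsnot
    refine ⟨hs.le, fun ε hε δ₀ hδ₀ => ⟨δ₀, hδ₀, le_rfl, ?_⟩⟩
    refine ⟨PEmpty, inferInstance, fun i => i.elim, by simp [hFe], fun i => i.elim, ?_⟩
    simp
  rcases Nat.eq_zero_or_pos n with hn0 | hn
  · exfalso
    subst hn0
    have hsub : Subsingleton (EuclideanSpace ℝ (Fin 0)) :=
      Subsingleton.intro fun a b => by ext i; exact i.elim0
    have hSempty : S = ∅ := by
      rw [Set.eq_empty_iff_forall_notMem]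
      intro s' hs'
      obtain ⟨δ, hδ1, _, hI⟩ := hs'.2 1 one_pos 1 one_pos
      obtain ⟨ι, hc, U, hcov, hdiam, _⟩ := hI
      obtain ⟨x₀, hx₀⟩ := hFne
      obtain ⟨i, _⟩ := Set.mem_iUnion.1 (hcov hx₀)
      have h1 := (hdiam i).1
      have h2 : EMetric.diam (U i) = 0 :=
        EMetric.diam_subsingleton (Set.subsingleton_of_subsingleton)
      rw [h2] at h1
      have h3 : 0 < δ ^ (1/θ) := Real.rpow_pos_of_pos hδ1 _
      exact absurd h1 (ENNReal.ofReal_pos.2 h3).not_ge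
    rw [hSempty, Real.sInf_empty] at hsd
    linarith
  have hneg : ∃ ε > (0:ℝ), ∃ δ₀ > (0:ℝ), ∀ δ' : ℝ, 0 < δ' → δ' ≤ δ₀ →
      ¬ ICov F s (δ' ^ (1/θ)) δ' ε := by
    by_contra hcon
    push_neg at hcon
    apply hsnot
    refine ⟨hs.le, fun ε hε δ₀ hδ₀ => ?_⟩
    obtain ⟨δ', h1, h2, h3⟩ := hcon ε hε δ₀ hδ₀
    exact ⟨δ', h1, h2, h3⟩
  obtain ⟨ε, hε, δ₀, hδ₀, hneg'⟩ := hneg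
  obtain ⟨x₀, hx₀⟩ := hFne
  set c : ℝ := max (Cc n s ε) (((δ₀ ^ (1/θ)) ^ s)⁻¹) with hcdef
  have hbase : (0:ℝ) < (δ₀ ^ (1/θ)) ^ s :=
    Real.rpow_pos_of_pos (Real.rpow_pos_of_pos hδ₀ _) s
  refine ⟨c, lt_of_lt_of_le (Cc_pos hn hε) (le_max_left _ _), ?_⟩
  intro δ hδ0' hδ1'
  rcases le_or_gt δ δ₀ with hcase | hcase
  · obtain ⟨μ, h1, h2, h3, h4⟩ := construction hn hF ⟨x₀, hx₀⟩ hθ0 hθ1 hs hε hδ0' hδ1'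
      (hneg' δ hδ0' hcase)
    refine ⟨μ, h1, h2, h3, fun x r hr1 hr2 => ?_⟩
    refine (h4 x r hr1 hr2).trans (ENNReal.ofReal_le_ofReal ?_)
    have hr0 : 0 < r := lt_of_lt_of_le (Real.rpow_pos_of_pos hδ0' _) hr1
    have hrs0 : 0 ≤ r ^ s := (Real.rpow_pos_of_pos hr0 s).le
    have hle : Cc n s ε ≤ c := le_max_left _ _
    nlinarith
  · refine ⟨Measure.dirac x₀, inferInstance, ?_, ⟨{x₀}, ?_⟩, ?_⟩
    · rw [Measure.dirac_apply' _ hF.isClosed.measurableSet.compl]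
      simp [hx₀]
    · have hmeas : MeasurableSet ((↑({x₀} : Finset (EuclideanSpace ℝ (Fin n))) :
          Set (EuclideanSpace ℝ (Fin n)))ᶜ) :=
        (Finset.finite_toSet _).isClosed.measurableSet.compl
      rw [Measure.dirac_apply' _ hmeas]
      simp
    · intro x r hr1 hr2
      have hδθ : δ₀ ^ (1/θ) ≤ r :=
        le_trans (Real.rpow_le_rpow hδ₀.le hcase.le (by positivity)) hr1
      have h5 : ((δ₀ ^ (1/θ)) ^ s) ≤ r ^ s :=
        Real.rpow_le_rpow (Real.rpow_pos_of_pos hδ₀ _).le hδθ hs.le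
      have h6 : 1 ≤ ((δ₀ ^ (1/θ)) ^ s)⁻¹ * r ^ s := by
        rw [← div_eq_inv_mul, le_div_iff₀ hbase, one_mul]
        exact h5
      have h7 : ((δ₀ ^ (1/θ)) ^ s)⁻¹ * r ^ s ≤ c * r ^ s := by
        have hr0 : 0 < r := lt_of_lt_of_le (Real.rpow_pos_of_pos hδ0' _) hr1
        have hrs0 : (0:ℝ) ≤ r ^ s := (Real.rpow_pos_of_pos hr0 s).le
        have := le_max_right (Cc n s ε) (((δ₀ ^ (1/θ)) ^ s)⁻¹)
        nlinarith
      calc Measure.dirac x₀ (Metric.closedBall x r) ≤ 1 := prob_le_one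
        _ ≤ ENNReal.ofReal (c * r ^ s) := by
            rw [← ENNReal.ofReal_one]
            exact ENNReal.ofReal_le_ofReal (h6.trans h7)
end

section
/- For any non-empty bounded F ⊆ ℝⁿ and θ ∈ (0,1), the lower θ-intermediate dimension of F is at least dim_A F − (dim_A F − lower box dimension of F)/θ, where dim_A is the Assouad dimension. -/
open Set

section AuxLemmas
open EMetric
theorem diam_insert_aux {X : Type} [PseudoEMetricSpace X] (A : Set X) (q q' : X) :
    diam (insert q A) ≤ diam (insert q' A) + edist q q' := by
  apply diam_le
  intro x hx y hy
  rcases hx with rfl | hx <;> rcases hy with rfl | hy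
  · simp
  · calc edist x y ≤ edist x q' + edist q' y := edist_triangle _ _ _
      _ ≤ edist x q' + diam (insert q' A) :=
          add_le_add le_rfl (edist_le_diam_of_mem (mem_insert _ _) (mem_insert_of_mem _ hy))
      _ = diam (insert q' A) + edist x q' := add_comm _ _
  · calc edist x y ≤ edist x q' + edist q' y := edist_triangle _ _ _
      _ ≤ diam (insert q' A) + edist y q' := by
          rw [edist_comm q' y]
          exact add_le_add (edist_le_diam_of_mem (mem_insert_of_mem _ hx) (mem_insert _ _)) le_rfl
  · exact le_trans (edist_le_diam_of_mem (mem_insert_of_mem _ hx) (mem_insert_of_mem _ hy)) le_self_add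

theorem exists_superset_diam_eq {n : ℕ} (hn : 0 < n) (U : Set (EuclideanSpace ℝ (Fin n)))
    (r : ℝ) (hr : 0 < r) (hU : diam U ≤ ENNReal.ofReal r) :
    ∃ V, U ⊆ V ∧ diam V = ENNReal.ofReal r := by
  set e : EuclideanSpace ℝ (Fin n) := EuclideanSpace.single (⟨0, hn⟩ : Fin n) (1:ℝ) with he
  have hne : ∀ (p : EuclideanSpace ℝ (Fin n)) (t : ℝ), dist p (p + t • e) = |t| := by
    intro p t
    rw [dist_self_add_right, norm_smul, he, EuclideanSpace.norm_single]
    simp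
  rcases U.eq_empty_or_nonempty with rfl | ⟨p, hp⟩
  · refine ⟨{0, r • e}, empty_subset _, ?_⟩
    rw [EMetric.diam, Metric.ediam_pair, edist_dist, dist_comm, dist_zero_right, norm_smul, he,
      EuclideanSpace.norm_single]
    simp [abs_of_nonneg hr.le]
  · have hfin : ∀ t : ℝ, diam (insert (p + t • e) U) ≠ ⊤ := by
      intro t
      have h1 := diam_insert_aux U (p + t • e) p
      rw [insert_eq_self.mpr hp] at h1
      refine ne_top_of_le_ne_top ?_ h1
      rw [edist_dist]
      exact ENNReal.add_ne_top.mpr ⟨ne_top_of_le_ne_top ENNReal.ofReal_ne_top hU, ENNReal.ofReal_ne_top⟩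
    set f : ℝ → ℝ := fun t => (diam (insert (p + t • e) U)).toReal with hf
    have hlip : ∀ t u : ℝ, f t ≤ f u + |t - u| := by
      intro t u
      have h1 := diam_insert_aux U (p + t • e) (p + u • e)
      have h2 : edist (p + t • e) (p + u • e) = ENNReal.ofReal |t - u| := by
        rw [edist_dist, dist_add_left, dist_eq_norm, ← sub_smul, norm_smul, he,
          EuclideanSpace.norm_single]
        simp
      rw [h2] at h1
      have := ENNReal.toReal_mono (by
        exact ENNReal.add_ne_top.mpr ⟨hfin u, ENNReal.ofReal_ne_top⟩) h1
      rwa [ENNReal.toReal_add (hfin u) ENNReal.ofReal_ne_top,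
        ENNReal.toReal_ofReal (abs_nonneg _)] at this
    have hcont : Continuous f := by
      apply (LipschitzWith.of_dist_le_mul (K := 1) ?_).continuous
      intro t u
      rw [Real.dist_eq, Real.dist_eq, NNReal.coe_one, one_mul, abs_sub_le_iff]
      constructor
      · linarith [hlip t u]
      · have := hlip u t
        rw [abs_sub_comm] at this
        linarith
    have hf0 : f 0 ≤ r := by
      have : insert (p + (0:ℝ) • e) U = U := by
        rw [zero_smul, add_zero, insert_eq_self.mpr hp]
      rw [hf]
      simp only [this]
      exact ENNReal.toReal_le_of_le_ofReal hr.le hU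
    have hfr : r ≤ f r := by
      have hmem : edist p (p + r • e) ≤ diam (insert (p + r • e) U) :=
        edist_le_diam_of_mem (mem_insert_of_mem _ hp) (mem_insert _ _)
      rw [edist_dist, hne p r, abs_of_nonneg hr.le] at hmem
      exact (ENNReal.ofReal_le_iff_le_toReal (hfin r)).mp hmem
    have := intermediate_value_Icc hr.le hcont.continuousOn
    obtain ⟨t₀, -, ht₀⟩ := this ⟨hf0, hfr⟩
    refine ⟨insert (p + t₀ • e) U, subset_insert _ _, ?_⟩
    rw [← ENNReal.ofReal_toReal (hfin t₀)]
    exact congrArg ENNReal.ofReal ht₀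

theorem coord_le_dist {n : ℕ} (x y : EuclideanSpace ℝ (Fin n)) (i : Fin n) :
    |y i - x i| ≤ dist y x := by
  rw [EuclideanSpace.dist_eq]
  have h2 : (y i - x i)^2 ≤ ∑ j, dist (y j) (x j) ^ 2 := by
    have := Finset.single_le_sum (f := fun j => dist (y j) (x j) ^ 2)
      (fun j _ => sq_nonneg _) (Finset.mem_univ i)
    simpa [Real.dist_eq, sq_abs] using this
  calc |y i - x i| = Real.sqrt ((y i - x i)^2) := (Real.sqrt_sq_eq_abs _).symm
    _ ≤ _ := Real.sqrt_le_sqrt h2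

theorem grid_cover {n : ℕ} (hn : 0 < n) (x : EuclideanSpace ℝ (Fin n)) (r R : ℝ)
    (hr : 0 < r) (hrR : r < R) :
    ∃ t : Finset (Set (EuclideanSpace ℝ (Fin n))),
      (EMetric.closedBall x (ENNReal.ofReal R) ⊆ ⋃ U ∈ t, U) ∧
      (∀ U ∈ t, diam U ≤ ENNReal.ofReal r) ∧
      ((t.card : ℝ) ≤ (2*(n:ℝ)+2)^(n:ℕ) * (R / r) ^ (n:ℝ)) := by
  classical
  have hR : 0 < R := hr.trans hrR
  have hRr : 1 ≤ R / r := (one_le_div hr).mpr hrR.le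
  set h : ℝ := r / n with hh
  have hh0 : 0 < h := div_pos hr (by exact_mod_cast hn)
  set Q : (Fin n → ℤ) → Set (EuclideanSpace ℝ (Fin n)) :=
    fun m => {y | ∀ i, (m i : ℝ) * h ≤ y i ∧ y i ≤ ((m i : ℝ) + 1) * h} with hQ
  set lo : Fin n → ℤ := fun i => ⌊(x i - R)/h⌋ with hlo
  set hi : Fin n → ℤ := fun i => ⌊(x i + R)/h⌋ with hhi
  refine ⟨Finset.image Q (Fintype.piFinset fun i => Finset.Icc (lo i) (hi i)), ?_, ?_, ?_⟩
  · -- cover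
    intro y hy
    have hyx : dist y x ≤ R := by
      change edist y x ≤ _ at hy; rw [edist_dist] at hy
      exact (ENNReal.ofReal_le_ofReal_iff hR.le).mp hy
    set m : Fin n → ℤ := fun i => ⌊y i / h⌋ with hm
    have hmem : y ∈ Q m := by
      intro i
      constructor
      · calc ((m i : ℝ)) * h ≤ (y i / h) * h :=
              mul_le_mul_of_nonneg_right (Int.floor_le _) hh0.le
          _ = y i := div_mul_cancel₀ _ hh0.ne'
      · calc y i = (y i / h) * h := (div_mul_cancel₀ _ hh0.ne').symm
          _ ≤ ((m i : ℝ) + 1) * h :=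
              mul_le_mul_of_nonneg_right (Int.lt_floor_add_one _).le hh0.le
    have hrange : m ∈ Fintype.piFinset fun i => Finset.Icc (lo i) (hi i) := by
      rw [Fintype.mem_piFinset]
      intro i
      rw [Finset.mem_Icc]
      have hco := coord_le_dist x y i
      rw [abs_le] at hco
      constructor
      · apply Int.floor_le_floor
        have hyi : x i - R ≤ y i := by linarith [hco.1]
        gcongr
      · apply Int.floor_le_floor
        have hyi : y i ≤ x i + R := by linarith [hco.2]
        gcongr
    exact mem_iUnion₂.mpr ⟨Q m, Finset.mem_image_of_mem Q hrange, hmem⟩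
  · -- diam
    intro U hU
    rw [Finset.mem_image] at hU
    obtain ⟨m, -, rfl⟩ := hU
    apply diam_le
    intro a ha b hb
    rw [edist_dist]
    apply ENNReal.ofReal_le_ofReal
    rw [EuclideanSpace.dist_eq]
    have hsum : ∑ i, dist (a i) (b i) ^ 2 ≤ (n : ℝ) * h ^ 2 := by
      calc ∑ i, dist (a i) (b i) ^ 2 ≤ ∑ _i : Fin n, h ^ 2 := by
            apply Finset.sum_le_sum
            intro i _
            have h1 := ha i
            have h2 := hb i
            rw [Real.dist_eq, sq_abs]
            apply sq_le_sq' <;> simp only [hQ, mem_setOf_eq] at h1 h2 <;> nlinarith [h1.1, h1.2, h2.1, h2.2]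
        _ = (n : ℝ) * h ^ 2 := by
            rw [Finset.sum_const, Finset.card_univ, Fintype.card_fin, nsmul_eq_mul]
    calc Real.sqrt (∑ i, dist (a i) (b i) ^ 2) ≤ Real.sqrt ((n:ℝ) * h ^ 2) :=
          Real.sqrt_le_sqrt hsum
      _ ≤ Real.sqrt (((n:ℝ) * h) ^ 2) := by
          apply Real.sqrt_le_sqrt
          rw [mul_pow]
          apply mul_le_mul_of_nonneg_right ?_ (sq_nonneg _)
          have : (1:ℝ) ≤ (n:ℝ) := by exact_mod_cast hn
          nlinarith
      _ = (n:ℝ) * h := Real.sqrt_sq (by positivity)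
      _ = r := by rw [hh]; field_simp
  · -- card
    have hb : ∀ i : Fin n, ((Finset.Icc (lo i) (hi i)).card : ℝ) ≤ (2*(n:ℝ)+2) * (R/r) := by
      intro i
      have hcard : (Finset.Icc (lo i) (hi i)).card = (hi i + 1 - lo i).toNat := Int.card_Icc _ _
      have hkey : ((hi i + 1 - lo i : ℤ) : ℝ) ≤ 2*R/h + 2 := by
        have h1 : ((hi i : ℤ) : ℝ) ≤ (x i + R)/h := Int.floor_le _
        have h2 : (x i - R)/h - 1 < ((lo i : ℤ) : ℝ) := Int.sub_one_lt_floor _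
        push_cast
        have : (x i + R)/h - ((x i - R)/h) = 2*R/h := by field_simp; ring
        linarith
      rw [hcard]
      rcases le_or_gt (hi i + 1 - lo i) 0 with hle | hpos
      · rw [Int.toNat_of_nonpos hle]
        push_cast
        positivity
      · rw [← Int.toNat_of_nonneg hpos.le] at hkey
        push_cast at hkey
        calc ((hi i + 1 - lo i).toNat : ℝ) ≤ 2*R/h + 2 := hkey
          _ = 2*(n:ℝ)*(R/r) + 2 := by rw [hh]; field_simp
          _ ≤ 2*(n:ℝ)*(R/r) + 2*(R/r) := by linarith
          _ = (2*(n:ℝ)+2) * (R/r) := by ring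
    calc ((Finset.image Q (Fintype.piFinset fun i => Finset.Icc (lo i) (hi i))).card : ℝ)
        ≤ ((Fintype.piFinset fun i => Finset.Icc (lo i) (hi i)).card : ℝ) := by
          exact_mod_cast Finset.card_image_le
      _ = ∏ i, ((Finset.Icc (lo i) (hi i)).card : ℝ) := by
          rw [Fintype.card_piFinset]; push_cast; ring
      _ ≤ ∏ _i : Fin n, (2*(n:ℝ)+2) * (R/r) := by
          apply Finset.prod_le_prod (fun i _ => by positivity) (fun i _ => hb i)
      _ = ((2*(n:ℝ)+2) * (R/r))^(n:ℕ) := by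
          rw [Finset.prod_const, Finset.card_univ, Fintype.card_fin]
      _ = (2*(n:ℝ)+2)^(n:ℕ) * (R / r) ^ (n:ℝ) := by
          rw [mul_pow, Real.rpow_natCast]

theorem fat' {n : ℕ} (hn : 0 < n) (r : ℝ) (hr : 0 < r) (W : Set (EuclideanSpace ℝ (Fin n))) :
    ∃ V, EMetric.diam V = ENNReal.ofReal r ∧
      (EMetric.diam W ≤ ENNReal.ofReal r → W ⊆ V) := by
  by_cases hW : EMetric.diam W ≤ ENNReal.ofReal r
  · obtain ⟨V, h1, h2⟩ := exists_superset_diam_eq hn W r hr hW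
    exact ⟨V, h2, fun _ => h1⟩
  · obtain ⟨V, h1, h2⟩ := exists_superset_diam_eq hn ∅ r hr (by simp [EMetric.diam])
    exact ⟨V, h2, fun h => absurd h hW⟩

theorem finsetCov {n : ℕ} (hn : 0 < n) {F : Set (EuclideanSpace ℝ (Fin n))}
    (t : Finset (Set (EuclideanSpace ℝ (Fin n)))) (r ε s : ℝ) (hr : 0 < r)
    (hcov : F ⊆ ⋃ U ∈ t, U) (hd : ∀ U ∈ t, EMetric.diam U ≤ ENNReal.ofReal r)
    (hsum : (t.card : ℝ) * r ^ s ≤ ε) : EqCov F s r ε := by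
  choose g hg1 hg2 using fat' hn r hr
  refine ⟨{W // W ∈ t}, inferInstance, fun W => g W.1, ?_, fun W => hg1 W.1, ?_⟩
  · intro y hy
    obtain ⟨U, hU, hyU⟩ := mem_iUnion₂.mp (hcov hy)
    exact mem_iUnion.mpr ⟨⟨U, hU⟩, hg2 U (hd U hU) hyU⟩
  · calc ∑' (W : {W // W ∈ t}), EMetric.diam (g W.1) ^ s
        = ∑ W : {W // W ∈ t}, EMetric.diam (g W.1) ^ s := tsum_fintype _
      _ = ∑ _W : {W // W ∈ t}, ENNReal.ofReal (r ^ s) := by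
          apply Finset.sum_congr rfl
          intro W _
          rw [hg1 W.1, ← ENNReal.ofReal_rpow_of_pos hr]
      _ = (t.card : ENNReal) * ENNReal.ofReal (r ^ s) := by
          rw [Finset.sum_const, Finset.card_univ, Fintype.card_coe, nsmul_eq_mul]
      _ = ENNReal.ofReal ((t.card : ℝ) * r ^ s) := by
          rw [ENNReal.ofReal_mul (by positivity), ENNReal.ofReal_natCast]
      _ ≤ ENNReal.ofReal ε := ENNReal.ofReal_le_ofReal hsum

theorem assouad_to_box {n : ℕ} (hn : 0 < n) {F : Set (EuclideanSpace ℝ (Fin n))}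
    (hne : F.Nonempty) (hF : Bornology.IsBounded F) {a C : ℝ} (ha : 0 ≤ a) (hC : 0 < C)
    (hA : ∀ x ∈ F, ∀ r R : ℝ, 0 < r → r < R →
      ∃ t : Finset (Set (EuclideanSpace ℝ (Fin n))),
        (F ∩ EMetric.closedBall x (ENNReal.ofReal R) ⊆ ⋃ U ∈ t, U) ∧
        (∀ U ∈ t, EMetric.diam U ≤ ENNReal.ofReal r) ∧ (t.card : ℝ) ≤ C * (R / r) ^ a)
    {u : ℝ} (hu : a < u) :
    ∀ ε > 0, ∀ δ₀ > 0, ∃ δ : ℝ, 0 < δ ∧ δ ≤ δ₀ ∧ EqCov F u δ ε := by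
  intro ε hε δ₀ hδ₀
  obtain ⟨x₀, hx₀⟩ := hne
  obtain ⟨R₀, hR₀⟩ := hF.subset_closedBall x₀
  set R : ℝ := max R₀ 0 + 1 with hR
  have hR1 : 1 ≤ R := by have := le_max_right R₀ (0:ℝ); simp only [hR]; linarith
  have hFR : F ⊆ EMetric.closedBall x₀ (ENNReal.ofReal R) := by
    intro y hy
    show edist y x₀ ≤ _; rw [edist_dist]
    apply ENNReal.ofReal_le_ofReal
    calc dist y x₀ ≤ R₀ := by simpa [Metric.mem_closedBall] using hR₀ hy
      _ ≤ R := by have := le_max_left R₀ (0:ℝ); simp only [hR]; linarith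
  set K : ℝ := C * (2*R)^a with hK
  have hK0 : 0 < K := by positivity
  set δ : ℝ := min (min δ₀ 1) ((ε/K) ^ (1/(u-a))) with hδ
  have hδpos : 0 < δ := by
    apply lt_min (lt_min hδ₀ one_pos)
    apply Real.rpow_pos_of_pos (by positivity)
  have hδ1 : δ ≤ 1 := le_trans (min_le_left _ _) (min_le_right _ _)
  have hδδ₀ : δ ≤ δ₀ := le_trans (min_le_left _ _) (min_le_left _ _)
  obtain ⟨t, hcov, hd, hcard⟩ := hA x₀ hx₀ (δ/2) R (by positivity) (by nlinarith)
  refine ⟨δ, hδpos, hδδ₀, finsetCov hn t δ ε u hδpos ?_ ?_ ?_⟩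
  · exact fun y hy => hcov ⟨hy, hFR hy⟩
  · intro U hU
    exact le_trans (hd U hU) (ENNReal.ofReal_le_ofReal (by linarith))
  · have h1 : C * (R/(δ/2))^a = K * δ^(-a) := by
      rw [hK, div_div_eq_mul_div, Real.div_rpow (by positivity) hδpos.le, Real.rpow_neg hδpos.le,
        mul_comm (2:ℝ) R]
      rw [mul_assoc, div_eq_mul_inv]
    have h2 : δ ^ (u-a) ≤ ε / K := by
      calc δ ^ (u-a) ≤ ((ε/K) ^ (1/(u-a))) ^ (u-a) := by
            apply Real.rpow_le_rpow hδpos.le (le_trans (min_le_right _ _) le_rfl) (by linarith)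
        _ = ε / K := by
            rw [one_div, Real.rpow_inv_rpow (by positivity) (by linarith [hu])]
    calc (t.card : ℝ) * δ ^ u ≤ C * (R/(δ/2))^a * δ ^ u := by
          apply mul_le_mul_of_nonneg_right hcard (Real.rpow_nonneg hδpos.le _)
      _ = K * δ^(-a) * δ^u := by rw [h1]
      _ = K * δ^(u-a) := by rw [mul_assoc, ← Real.rpow_add hδpos, neg_add_eq_sub]
      _ ≤ K * (ε/K) := mul_le_mul_of_nonneg_left h2 hK0.le
      _ = ε := by field_simp

theorem main_cover {n : ℕ} (hn : 0 < n) {F : Set (EuclideanSpace ℝ (Fin n))}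
    {θ : ℝ} (hθ : θ ∈ Set.Ioo (0:ℝ) 1) {a s C : ℝ} (hs0 : 0 ≤ s) (hsa : s ≤ a) (hC : 0 < C)
    (hA : ∀ x ∈ F, ∀ r R : ℝ, 0 < r → r < R →
      ∃ t : Finset (Set (EuclideanSpace ℝ (Fin n))),
        (F ∩ EMetric.closedBall x (ENNReal.ofReal R) ⊆ ⋃ U ∈ t, U) ∧
        (∀ U ∈ t, EMetric.diam U ≤ ENNReal.ofReal r) ∧ (t.card : ℝ) ≤ C * (R / r) ^ a)
    (hL : ∀ ε > 0, ∀ δ₀ > 0, ∃ δ : ℝ, 0 < δ ∧ δ ≤ δ₀ ∧ ICov F s (δ ^ (1/θ)) δ ε)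
    {u : ℝ} (hu : (1-θ)*a + θ*s < u) :
    ∀ ε > 0, ∀ δ₀ > 0, ∃ δ : ℝ, 0 < δ ∧ δ ≤ δ₀ ∧ EqCov F u δ ε := by
  obtain ⟨hθ0, hθ1⟩ := hθ
  have ha : 0 ≤ a := hs0.trans hsa
  intro ε hε δ₀ hδ₀
  set K : ℝ := C * 2^a with hKdef
  have hK0 : 0 < K := by positivity
  obtain ⟨δ, hδpos, hδle, hIC⟩ := hL (ε/K) (by positivity) (min δ₀ 1) (by positivity)
  have hδ1 : δ ≤ 1 := hδle.trans (min_le_right _ _)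
  have hδδ₀ : δ ≤ δ₀ := hδle.trans (min_le_left _ _)
  set r : ℝ := δ ^ (1/θ) with hrdef
  have hr0 : 0 < r := Real.rpow_pos_of_pos hδpos _
  have hrδ : r ≤ δ := by
    calc r ≤ δ ^ (1:ℝ) := Real.rpow_le_rpow_of_exponent_ge hδpos hδ1
              (by rw [le_div_iff₀ hθ0]; linarith)
      _ = δ := Real.rpow_one δ
  obtain ⟨ι, cnt, U, hcov, hdiam, hsum⟩ := hIC
  have diamfin : ∀ i, EMetric.diam (U i) ≠ ⊤ :=
    fun i => ne_top_of_le_ne_top ENNReal.ofReal_ne_top (hdiam i).2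
  set D : ι → ℝ := fun i => (EMetric.diam (U i)).toReal with hDdef
  have hDeq : ∀ i, EMetric.diam (U i) = ENNReal.ofReal (D i) :=
    fun i => (ENNReal.ofReal_toReal (diamfin i)).symm
  have hDr : ∀ i, r ≤ D i :=
    fun i => (ENNReal.ofReal_le_iff_le_toReal (diamfin i)).mp (hdiam i).1
  have hDδ : ∀ i, D i ≤ δ :=
    fun i => ENNReal.toReal_le_of_le_ofReal hδpos.le (hdiam i).2
  have hD0 : ∀ i, 0 < D i := fun i => lt_of_lt_of_le hr0 (hDr i)
  have hT : ∀ i, ∃ t : Finset (Set (EuclideanSpace ℝ (Fin n))),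
      (F ∩ U i ⊆ ⋃ W ∈ t, W) ∧ (∀ W ∈ t, EMetric.diam W ≤ ENNReal.ofReal (r/2)) ∧
      ((t.card : ℝ) ≤ C * (D i/(r/2))^a) := by
    intro i
    by_cases hFU : (F ∩ U i).Nonempty
    · obtain ⟨x, hxF, hxU⟩ := hFU
      obtain ⟨t, h1, h2, h3⟩ := hA x hxF (r/2) (D i) (by positivity)
        (lt_of_lt_of_le (by linarith) (hDr i))
      refine ⟨t, ?_, h2, h3⟩
      intro y ⟨hyF, hyU⟩
      apply h1
      refine ⟨hyF, ?_⟩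
      show edist y x ≤ _; rw [← hDeq i]
      exact EMetric.edist_le_diam_of_mem hyU hxU
    · exact ⟨∅, by simp [not_nonempty_iff_eq_empty.mp hFU], by simp, by simp; positivity⟩
  choose T hT1 hT2 hT3 using hT
  choose g hg1 hg2 using fat' hn r hr0
  refine ⟨r, hr0, hrδ.trans hδδ₀,
    ⟨(i : ι) × {W : Set (EuclideanSpace ℝ (Fin n)) // W ∈ T i}, inferInstance,
      fun p => g p.2.1, ?_, fun p => hg1 p.2.1, ?_⟩⟩
  · intro y hy
    obtain ⟨i, hi⟩ := mem_iUnion.mp (hcov hy)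
    obtain ⟨W, hW, hyW⟩ := mem_iUnion₂.mp (hT1 i ⟨hy, hi⟩)
    refine mem_iUnion.mpr ⟨⟨i, W, hW⟩, ?_⟩
    exact hg2 W (le_trans (hT2 i W hW) (ENNReal.ofReal_le_ofReal (by linarith))) hyW
  · set η : ℝ := (a - s) + (1/θ)*(u - a) with hη
    have hη0 : 0 ≤ η := by
      have h1 : 0 < θ * (a-s) + (u - a) := by nlinarith
      have hident : η = (θ*(a-s) + (u-a))/θ := by rw [hη]; field_simp
      rw [hident]
      exact (div_pos h1 hθ0).le
    have hru : 0 ≤ r^u := Real.rpow_nonneg hr0.le u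
    have key : ∀ i, C * (D i/(r/2))^a * r^u ≤ K * (D i)^s := by
      intro i
      have hra : (0:ℝ) < r^a := Real.rpow_pos_of_pos hr0 a
      have e0 : D i/(r/2) = 2*D i/r := by field_simp
      have e0' : (D i/(r/2))^a = (2^a * (D i)^a)/r^a := by
        rw [e0, Real.div_rpow (by positivity) hr0.le,
          Real.mul_rpow (by norm_num) (hD0 i).le]
      have e1 : C * (D i/(r/2))^a * r^u = K * (D i)^a * (r^u/r^a) := by
        rw [e0', hKdef, div_eq_mul_inv, div_eq_mul_inv]; ring
      have f1 : (D i)^a = (D i)^s * (D i)^(a-s) := by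
        rw [← Real.rpow_add (hD0 i)]; ring_nf
      have f2 : (D i)^(a-s) ≤ δ^(a-s) :=
        Real.rpow_le_rpow (hD0 i).le (hDδ i) (by linarith)
      have f3 : r^u/r^a = δ^((1/θ)*(u-a)) := by
        rw [← Real.rpow_sub hr0, hrdef, ← Real.rpow_mul hδpos.le]
      have f4 : δ^(a-s) * δ^((1/θ)*(u-a)) = δ^η := (Real.rpow_add hδpos _ _).symm
      have f5 : δ^η ≤ 1 := Real.rpow_le_one hδpos.le hδ1 hη0
      calc C * (D i/(r/2))^a * r^u = K * ((D i)^s * (D i)^(a-s)) * (r^u/r^a) := by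
            rw [e1, f1]
        _ = (K * (D i)^s) * ((D i)^(a-s) * δ^((1/θ)*(u-a))) := by rw [f3]; ring
        _ ≤ (K * (D i)^s) * (δ^(a-s) * δ^((1/θ)*(u-a))) := by
            apply mul_le_mul_of_nonneg_left
              (mul_le_mul_of_nonneg_right f2 (Real.rpow_nonneg hδpos.le _))
            positivity
        _ = (K * (D i)^s) * δ^η := by rw [f4]
        _ ≤ (K * (D i)^s) * 1 := mul_le_mul_of_nonneg_left f5 (by positivity)
        _ = K * (D i)^s := mul_one _
    calc ∑' (p : (i : ι) × {W : Set (EuclideanSpace ℝ (Fin n)) // W ∈ T i}),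
          EMetric.diam (g p.2.1) ^ u
        = ∑' (i : ι), ∑' (W : {W : Set (EuclideanSpace ℝ (Fin n)) // W ∈ T i}),
            EMetric.diam (g W.1) ^ u := ENNReal.tsum_sigma' _
      _ = ∑' (i : ι), ((T i).card : ENNReal) * ENNReal.ofReal (r^u) := by
          apply tsum_congr
          intro i
          rw [tsum_fintype]
          have : ∀ W : {W : Set (EuclideanSpace ℝ (Fin n)) // W ∈ T i},
              EMetric.diam (g W.1) ^ u = ENNReal.ofReal (r^u) := by
            intro W
            rw [hg1 W.1, ← ENNReal.ofReal_rpow_of_pos hr0]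
          rw [Finset.sum_congr rfl (fun W _ => this W), Finset.sum_const, Finset.card_univ,
            Fintype.card_coe, nsmul_eq_mul]
      _ ≤ ∑' (i : ι), ENNReal.ofReal K * ENNReal.ofReal ((D i)^s) := by
          apply ENNReal.tsum_le_tsum
          intro i
          rw [← ENNReal.ofReal_natCast, ← ENNReal.ofReal_mul (Nat.cast_nonneg _),
            ← ENNReal.ofReal_mul hK0.le]
          apply ENNReal.ofReal_le_ofReal
          calc ((T i).card : ℝ) * r^u ≤ (C * (D i/(r/2))^a) * r^u :=
                mul_le_mul_of_nonneg_right (hT3 i) hru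
            _ ≤ K * (D i)^s := key i
      _ = ENNReal.ofReal K * ∑' (i : ι), ENNReal.ofReal ((D i)^s) := ENNReal.tsum_mul_left
      _ = ENNReal.ofReal K * ∑' (i : ι), EMetric.diam (U i) ^ s := by
          congr 1
          apply tsum_congr
          intro i
          rw [← ENNReal.ofReal_rpow_of_pos (hD0 i), ← hDeq i]
      _ ≤ ENNReal.ofReal K * ENNReal.ofReal (ε/K) := mul_le_mul_right hsum _
      _ = ENNReal.ofReal (K * (ε/K)) := (ENNReal.ofReal_mul hK0.le).symm
      _ = ENNReal.ofReal ε := by rw [mul_div_cancel₀ _ hK0.ne']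

theorem le_of_forall_gt' {B c : ℝ} (h : ∀ u, c < u → B ≤ u) : B ≤ c := by
  by_contra h'
  push_neg at h'
  have h1 := h ((c+B)/2) (by linarith)
  linarith

end AuxLemmas

theorem stmt11 (n : ℕ) (F : Set (EuclideanSpace ℝ (Fin n))) (hne : F.Nonempty)
    (hF : Bornology.IsBounded F) (θ : ℝ) (hθ : θ ∈ Set.Ioo (0:ℝ) 1) :
    assouadDim F - (assouadDim F - lowerBoxDim F) / θ ≤ lowerIDim F θ := by
  obtain ⟨hθ0, hθ1⟩ := hθ
  set AS : Set ℝ := {s : ℝ | 0 ≤ s ∧ ∃ C > (0:ℝ), ∀ x ∈ F, ∀ r R : ℝ, 0 < r → r < R →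
    ∃ t : Finset (Set (EuclideanSpace ℝ (Fin n))),
      (F ∩ EMetric.closedBall x (ENNReal.ofReal R) ⊆ ⋃ U ∈ t, U) ∧
      (∀ U ∈ t, EMetric.diam U ≤ ENNReal.ofReal r) ∧ (t.card : ℝ) ≤ C * (R / r) ^ s} with hAS
  set BS : Set ℝ := {s : ℝ | 0 ≤ s ∧ ∀ ε > 0, ∀ δ₀ > 0, ∃ δ : ℝ, 0 < δ ∧ δ ≤ δ₀ ∧
    EqCov F s δ ε} with hBS
  set LS : Set ℝ := {s : ℝ | 0 ≤ s ∧ ∀ ε > 0, ∀ δ₀ > 0, ∃ δ : ℝ, 0 < δ ∧ δ ≤ δ₀ ∧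
    ICov F s (δ ^ (1 / θ)) δ ε} with hLS
  have hAeq : assouadDim F = sInf AS := rfl
  have hBeq : lowerBoxDim F = sInf BS := rfl
  have hLeq : lowerIDim F θ = sInf LS := by
    rw [lowerIDim, if_neg (ne_of_gt hθ0)]
  rw [hAeq, hBeq, hLeq]
  have hASbd : BddBelow AS := ⟨0, fun x hx => hx.1⟩
  have hBSbd : BddBelow BS := ⟨0, fun x hx => hx.1⟩
  rcases Nat.eq_zero_or_pos n with hn0 | hn
  · subst hn0
    have hsub : Subsingleton (EuclideanSpace ℝ (Fin 0)) := ⟨fun a b => by ext i; exact i.elim0⟩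
    have hdiam0 : ∀ (S : Set (EuclideanSpace ℝ (Fin 0))), EMetric.diam S = 0 :=
      fun S => EMetric.diam_subsingleton (fun x _ y _ => Subsingleton.elim x y)
    have hA0 : (0:ℝ) ∈ AS := by
      refine ⟨le_rfl, 1, one_pos, fun x hx r R hr hrR => ⟨{Set.univ}, ?_, ?_, ?_⟩⟩
      · intro y hy; simp
      · intro U hU
        rw [Finset.mem_singleton] at hU
        subst hU
        rw [hdiam0]
        exact zero_le
      · simp [Real.rpow_zero]
    have hAdim : sInf AS = 0 :=
      le_antisymm (csInf_le hASbd hA0) (Real.sInf_nonneg (fun x hx => hx.1))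
    have hBSempty : BS = ∅ := by
      apply eq_empty_iff_forall_notMem.mpr
      rintro t ⟨ht0, ht⟩
      obtain ⟨δ, hδ, -, ι, -, U, hcov, hdeq, -⟩ := ht 1 one_pos 1 one_pos
      obtain ⟨x₀, hx₀⟩ := hne
      obtain ⟨i, hi⟩ := mem_iUnion.mp (hcov hx₀)
      have h2 := hdeq i
      rw [hdiam0] at h2
      exact (ENNReal.ofReal_pos.mpr hδ).ne' h2.symm
    have hBdim : sInf BS = 0 := by rw [hBSempty, Real.sInf_empty]
    rw [hAdim, hBdim]
    have h3 : (0:ℝ) - (0-0)/θ = 0 := by norm_num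
    rw [h3]
    exact Real.sInf_nonneg (fun x hx => hx.1)
  · -- n ≥ 1
    have hA_n : ((2*(n:ℝ)+2)^(n:ℕ) : ℝ) > 0 := by positivity
    have hAn : (n:ℝ) ∈ AS := by
      refine ⟨Nat.cast_nonneg n, (2*(n:ℝ)+2)^(n:ℕ), hA_n, fun x hx r R hr hrR => ?_⟩
      obtain ⟨t, h1, h2, h3⟩ := grid_cover hn x r R hr hrR
      exact ⟨t, fun y hy => h1 hy.2, h2, h3⟩
    have hASne : AS.Nonempty := ⟨_, hAn⟩
    have hBfromA : ∀ a ∈ AS, ∀ u, a < u → u ∈ BS := by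
      rintro a ⟨ha0, C, hC, hA⟩ u hu
      exact ⟨ha0.trans hu.le, assouad_to_box hn hne hF ha0 hC hA hu⟩
    have hBtoL : ∀ b ∈ BS, b ∈ LS := by
      rintro b ⟨hb0, hb⟩
      refine ⟨hb0, fun ε hε δ₀ hδ₀ => ?_⟩
      obtain ⟨δ, hδ, hδle, ι, cnt, U, hcov, hdeq, hsum⟩ := hb ε hε (min δ₀ 1) (by positivity)
      have hδ1 : δ ≤ 1 := hδle.trans (min_le_right _ _)
      refine ⟨δ, hδ, hδle.trans (min_le_left _ _), ι, cnt, U, hcov, fun i => ?_, hsum⟩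
      rw [hdeq i]
      refine ⟨ENNReal.ofReal_le_ofReal ?_, le_rfl⟩
      calc δ ^ (1/θ) ≤ δ ^ (1:ℝ) := Real.rpow_le_rpow_of_exponent_ge hδ hδ1
            (by rw [le_div_iff₀ hθ0]; linarith)
        _ = δ := Real.rpow_one δ
    have hLSne : LS.Nonempty := ⟨(n:ℝ)+1, hBtoL _ (hBfromA _ hAn _ (lt_add_one _))⟩
    have hMain : ∀ a ∈ AS, ∀ s ∈ LS, s ≤ a → ∀ u, (1-θ)*a + θ*s < u → u ∈ BS := by
      rintro a ⟨ha0, C, hC, hA⟩ s ⟨hs0, hL⟩ hsa u hu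
      have hu0 : 0 ≤ u := by nlinarith
      exact ⟨hu0, main_cover hn ⟨hθ0, hθ1⟩ hs0 hsa hC hA hL hu⟩
    have key : ∀ s ∈ LS, ∀ a ∈ AS, sInf BS ≤ (1-θ)*a + θ*s := by
      intro s hs a ha
      rcases le_or_gt s a with hsa | has
      · apply le_of_forall_gt'
        intro u hu
        exact csInf_le hBSbd (hMain a ha s hs hsa u hu)
      · have hBa : sInf BS ≤ a := by
          apply le_of_forall_gt'
          intro u hu
          exact csInf_le hBSbd (hBfromA a ha u hu)
        nlinarith
    apply le_csInf hLSne
    intro s hs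
    have h1θ : (0:ℝ) < 1 - θ := by linarith
    have hAge : (sInf BS - θ*s)/(1-θ) ≤ sInf AS := by
      apply le_csInf hASne
      intro a ha
      rw [div_le_iff₀ h1θ]
      linarith [key s hs a ha]
    have hB : sInf BS ≤ (1-θ)*(sInf AS) + θ*s := by
      rw [div_le_iff₀ h1θ] at hAge
      linarith
    have h2 : sInf AS - s ≤ (sInf AS - sInf BS)/θ := by
      rw [le_div_iff₀ hθ0]
      nlinarith
    linarith
end
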